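/- arXiv:2209.11491 — 6 statements merged into one kernel-verified Lean document; each statement's English description precedes it below -/
import Mathlib

section
/- Let f_1,…,f_n : [0,∞) → ℝ be bounded continuous functions and define u(x,i) := Σ_{k=1}^n 2p_k ∫₀^∞ g_r((x,i),(y,k)) f_k(y) dy. Then for each leg i the function x ↦ u(x,i) is twice continuously differentiable on (0,∞) and satisfies the resolvent equation (1/2)·∂²u/∂x²(x,i) − r·u(x,i) = −f_i(x) for all x > 0. -/
open Filter Topology MeasureTheory

/-- Green function of the Brownian spider with `n` legs, weights `p`, and `θ = √(2r)`. -/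
noncomputable def spiderGreen (n : ℕ) (p : Fin n → ℝ) (θ : ℝ)
    (x : ℝ) (i : Fin n) (y : ℝ) (j : Fin n) : ℝ :=
  if i = j then
    (1/θ) * Real.exp (-θ * max x y) *
      ((1 / p i) * Real.sinh (θ * min x y) + Real.exp (-θ * min x y))
  else (1/θ) * Real.exp (-θ * x) * Real.exp (-θ * y)

/-- Integrability of `exp(-θ y) * f y` on `Ioi a` for bounded continuous `f`. -/
lemma aux_int {θ : ℝ} (hθ : 0 < θ) {f : ℝ → ℝ} {C : ℝ}
    (hc : ContinuousOn f (Set.Ici 0)) (hb : ∀ y ≥ (0:ℝ), |f y| ≤ C)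
    {a : ℝ} (ha : 0 ≤ a) :
    IntegrableOn (fun y => Real.exp (-θ * y) * f y) (Set.Ioi a) := by
  have hsub : Set.Ioi a ⊆ Set.Ici (0:ℝ) := fun y hy => le_of_lt (lt_of_le_of_lt ha hy)
  have hmeas : AEStronglyMeasurable (fun y => Real.exp (-θ * y) * f y)
      (MeasureTheory.volume.restrict (Set.Ioi a)) := by
    apply ContinuousOn.aestronglyMeasurable _ measurableSet_Ioi
    exact (Real.continuous_exp.comp (continuous_const.mul continuous_id)).continuousOn.mul
      (hc.mono hsub)
  have hint : IntegrableOn (fun y => C * Real.exp (-θ * y)) (Set.Ioi a) :=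
    (exp_neg_integrableOn_Ioi a hθ).const_mul C
  refine Integrable.mono' hint hmeas ?_
  filter_upwards [MeasureTheory.ae_restrict_mem measurableSet_Ioi] with y hy
  have h0 : (0:ℝ) ≤ y := hsub hy
  rw [Real.norm_eq_abs, abs_mul, Real.abs_exp]
  calc Real.exp (-θ*y) * |f y| ≤ Real.exp (-θ*y) * C :=
        mul_le_mul_of_nonneg_left (hb y h0) (Real.exp_pos _).le
    _ = C * Real.exp (-θ*y) := mul_comm _ _

/-- Splitting an integral over `Ioi 0` at a point `x ≥ 0`. -/
lemma aux_split {g : ℝ → ℝ} {x : ℝ} (hx : 0 ≤ x)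
    (h1 : IntegrableOn g (Set.Ioc 0 x)) (h2 : IntegrableOn g (Set.Ioi x)) :
    ∫ y in Set.Ioi (0:ℝ), g y = (∫ y in Set.Ioc 0 x, g y) + ∫ y in Set.Ioi x, g y := by
  rw [← Set.Ioc_union_Ioi_eq_Ioi hx,
    MeasureTheory.setIntegral_union (Set.Ioc_disjoint_Ioi le_rfl) measurableSet_Ioi h1 h2]

/-- the resolvent `u` of the Brownian spider applied to bounded continuous
functions is twice continuously differentiable on each leg and satisfies
`(1/2)u'' − r·u = −f_i` there. -/
theorem stmt_4 (n : ℕ) (hn : 1 ≤ n) (p : Fin n → ℝ)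
    (hp : ∀ k, 0 < p k) (hpsum : ∑ k, p k = 1)
    (r : ℝ) (hr : 0 < r) (θ : ℝ) (hθ : θ = Real.sqrt (2 * r))
    (f : Fin n → ℝ → ℝ)
    (hf_cont : ∀ k, ContinuousOn (f k) (Set.Ici 0))
    (hf_bdd : ∀ k, ∃ C, ∀ y ≥ (0:ℝ), |f k y| ≤ C)
    (u : ℝ → Fin n → ℝ)
    (hu : ∀ x i, u x i =
      ∑ k, 2 * p k * ∫ y in Set.Ioi (0:ℝ), spiderGreen n p θ x i y k * f k y)
    (i : Fin n) :
    ∃ u' u'' : ℝ → ℝ,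
      (∀ x > (0:ℝ), HasDerivAt (fun t => u t i) (u' x) x) ∧
      (∀ x > (0:ℝ), HasDerivAt u' (u'' x) x) ∧
      ContinuousOn u'' (Set.Ioi 0) ∧
      (∀ x > (0:ℝ), (1/2) * u'' x - r * u x i = -f i x) := by
  have hθpos : 0 < θ := by
    rw [hθ]; exact Real.sqrt_pos.mpr (by linarith)
  have hθ2 : θ ^ 2 = 2 * r := by
    rw [hθ, Real.sq_sqrt (by linarith)]
  -- constants
  set c : Fin n → ℝ := fun k => ∫ y in Set.Ioi (0:ℝ), Real.exp (-θ * y) * f k y with hc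
  set A : ℝ := ∑ k, 2 * p k * (1/θ) * c k with hA
  -- interval integrals
  set F : ℝ → ℝ := fun x => ∫ y in (0:ℝ)..x, Real.sinh (θ * y) * f i y with hF
  set G : ℝ → ℝ := fun x => ∫ y in (0:ℝ)..x, Real.exp (-θ * y) * f i y with hG
  obtain ⟨C, hC⟩ := hf_bdd i
  -- integrability facts
  have hinti : ∀ a : ℝ, 0 ≤ a →
      IntegrableOn (fun y => Real.exp (-θ * y) * f i y) (Set.Ioi a) :=
    fun a ha => aux_int hθpos (hf_cont i) hC ha
  -- continuity of the integrands of F and G near positive points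
  have hFcont : ContinuousOn (fun y => Real.sinh (θ * y) * f i y) (Set.Ici 0) :=
    (Real.continuous_sinh.comp (continuous_const.mul continuous_id)).continuousOn.mul
      (hf_cont i)
  have hGcont : ContinuousOn (fun y => Real.exp (-θ * y) * f i y) (Set.Ici 0) :=
    (Real.continuous_exp.comp (continuous_const.mul continuous_id)).continuousOn.mul
      (hf_cont i)
  -- derivative apparatus for F and G
  have hFG_deriv : ∀ x > (0:ℝ),
      HasDerivAt F (Real.sinh (θ * x) * f i x) x ∧
      HasDerivAt G (Real.exp (-θ * x) * f i x) x := by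
    intro x hx
    have hIci : Set.Ici (0:ℝ) ∈ nhds x := Ici_mem_nhds hx
    have hsubI : Set.uIcc (0:ℝ) x ⊆ Set.Ici 0 := by
      rw [Set.uIcc_of_le hx.le]; exact fun y hy => hy.1
    have hfi_at : ContinuousAt (f i) x := (hf_cont i).continuousAt hIci
    constructor
    · refine intervalIntegral.integral_hasDerivAt_right
        ((hFcont.mono hsubI).intervalIntegrable) ?_ ?_
      · exact ⟨Set.Ici 0, hIci, (hFcont.aestronglyMeasurable measurableSet_Ici)⟩
      · exact ((Real.continuous_sinh.comp (continuous_const.mul continuous_id)).continuousAt).mul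
          hfi_at
    · refine intervalIntegral.integral_hasDerivAt_right
        ((hGcont.mono hsubI).intervalIntegrable) ?_ ?_
      · exact ⟨Set.Ici 0, hIci, (hGcont.aestronglyMeasurable measurableSet_Ici)⟩
      · exact ((Real.continuous_exp.comp (continuous_const.mul continuous_id)).continuousAt).mul
          hfi_at
  -- the key identity: for x > 0, u x i equals the explicit formula U x
  have key : ∀ x > (0:ℝ), u x i =
      A * Real.exp (-θ * x) +
        (2/θ) * (Real.exp (-θ * x) * F x + Real.sinh (θ * x) * (c i - G x)) := by
    intro x hx
    -- compute each term of the sum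
    have hterm : ∀ k, (2 * p k * ∫ y in Set.Ioi (0:ℝ), spiderGreen n p θ x i y k * f k y)
        = 2 * p k * (1/θ) * c k * Real.exp (-θ * x) +
          (if k = i then
            (2/θ) * (Real.exp (-θ * x) * F x + Real.sinh (θ * x) * (c i - G x)) else 0) := by
      intro k
      by_cases hk : k = i
      · subst hk
        -- split the integral at x
        have hIoc_cont : ContinuousOn
            (fun y => spiderGreen n p θ x k y k * f k y) (Set.Icc 0 x) := by
          have : ContinuousOn (fun y => spiderGreen n p θ x k y k) (Set.Icc 0 x) := by
            simp only [spiderGreen, eq_self_iff_true, if_true]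
            apply ContinuousOn.mul
            · exact (continuous_const.mul (Real.continuous_exp.comp
                (continuous_const.mul (continuous_const.max continuous_id)))).continuousOn
            · exact ((continuous_const.mul (Real.continuous_sinh.comp
                (continuous_const.mul (continuous_const.min continuous_id)))).add
                (Real.continuous_exp.comp
                  (continuous_const.mul (continuous_const.min continuous_id)))).continuousOn
          exact this.mul ((hf_cont k).mono (fun y hy => hy.1))
        have h1 : IntegrableOn (fun y => spiderGreen n p θ x k y k * f k y)
            (Set.Ioc 0 x) :=
          (hIoc_cont.integrableOn_compact isCompact_Icc).mono_set Set.Ioc_subset_Icc_self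
        have hEq2 : Set.EqOn
            (fun y => ((1/θ) * ((1 / p k) * Real.sinh (θ * x) + Real.exp (-θ * x))) *
              (Real.exp (-θ * y) * f k y))
            (fun y => spiderGreen n p θ x k y k * f k y) (Set.Ioi x) := by
          intro y hy
          have hy' : x < y := hy
          simp only [spiderGreen, eq_self_iff_true, if_true, max_eq_right hy'.le, min_eq_left hy'.le]
          ring
        have h2 : IntegrableOn (fun y => spiderGreen n p θ x k y k * f k y)
            (Set.Ioi x) := by
          refine IntegrableOn.congr_fun ?_ hEq2 measurableSet_Ioi
          exact (hinti x hx.le).const_mul _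
        rw [aux_split hx.le h1 h2]
        -- compute the Ioc part
        have hIoc : (∫ y in Set.Ioc 0 x, spiderGreen n p θ x k y k * f k y)
            = (1/θ) * (1 / p k) * Real.exp (-θ * x) * F x
              + (1/θ) * Real.exp (-θ * x) * G x := by
          have hEq1 : Set.EqOn (fun y => spiderGreen n p θ x k y k * f k y)
              (fun y => ((1/θ) * (1 / p k) * Real.exp (-θ * x)) *
                  (Real.sinh (θ * y) * f k y)
                + ((1/θ) * Real.exp (-θ * x)) * (Real.exp (-θ * y) * f k y))
              (Set.Ioc 0 x) := by
            intro y hy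
            simp only [spiderGreen, eq_self_iff_true, if_true, max_eq_left hy.2, min_eq_right hy.2]
            ring
          rw [MeasureTheory.setIntegral_congr_fun measurableSet_Ioc hEq1]
          have hint1 : IntegrableOn (fun y => ((1/θ) * (1 / p k) * Real.exp (-θ * x)) *
              (Real.sinh (θ * y) * f k y)) (Set.Ioc 0 x) := by
            apply MeasureTheory.Integrable.const_mul
            refine (ContinuousOn.integrableOn_compact isCompact_Icc ?_).mono_set
              Set.Ioc_subset_Icc_self
            exact hFcont.mono (fun y hy => hy.1)
          have hint2 : IntegrableOn (fun y => ((1/θ) * Real.exp (-θ * x)) *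
              (Real.exp (-θ * y) * f k y)) (Set.Ioc 0 x) := by
            apply MeasureTheory.Integrable.const_mul
            refine (ContinuousOn.integrableOn_compact isCompact_Icc ?_).mono_set
              Set.Ioc_subset_Icc_self
            exact hGcont.mono (fun y hy => hy.1)
          rw [MeasureTheory.integral_add hint1 hint2,
            MeasureTheory.integral_const_mul, MeasureTheory.integral_const_mul]
          rw [hF, hG]
          simp only [intervalIntegral.integral_of_le hx.le]
        -- compute the Ioi part
        have hIoi : (∫ y in Set.Ioi x, spiderGreen n p θ x k y k * f k y)
            = ((1/θ) * ((1 / p k) * Real.sinh (θ * x) + Real.exp (-θ * x))) *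
              (c k - G x) := by
          rw [← MeasureTheory.setIntegral_congr_fun measurableSet_Ioi hEq2,
            MeasureTheory.integral_const_mul]
          congr 1
          -- ∫ Ioi x exp f = c k - G x
          have hsp : (∫ y in Set.Ioi (0:ℝ), Real.exp (-θ * y) * f k y)
              = (∫ y in Set.Ioc 0 x, Real.exp (-θ * y) * f k y)
                + ∫ y in Set.Ioi x, Real.exp (-θ * y) * f k y :=
            aux_split hx.le ((hinti 0 le_rfl).mono_set (fun y hy => hy.1)) (hinti x hx.le)
          simp only [hc, hG, intervalIntegral.integral_of_le hx.le]
          linarith [hsp]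
        rw [hIoc, hIoi]
        simp only [eq_self_iff_true, if_true]
        have hpk : p k ≠ 0 := (hp k).ne'
        have hθ0 : θ ≠ 0 := hθpos.ne'
        field_simp
        ring
      · -- k ≠ i : pure exponential term
        have hik : ¬ (i = k) := fun h => hk h.symm
        have : (∫ y in Set.Ioi (0:ℝ), spiderGreen n p θ x i y k * f k y)
            = (1/θ) * Real.exp (-θ * x) * c k := by
          have hEq : (fun y => spiderGreen n p θ x i y k * f k y)
              = fun y => ((1/θ) * Real.exp (-θ * x)) * (Real.exp (-θ * y) * f k y) := by
            funext y
            simp only [spiderGreen, if_neg hik]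
            ring
          rw [hEq, MeasureTheory.integral_const_mul, hc]
        rw [this, if_neg hk]
        ring
    rw [hu x i]
    rw [Finset.sum_congr rfl (fun k _ => hterm k), Finset.sum_add_distrib,
      Finset.sum_ite_eq' Finset.univ i
        (fun _ => (2/θ) * (Real.exp (-θ * x) * F x + Real.sinh (θ * x) * (c i - G x)))]
    simp only [Finset.mem_univ, if_pos]
    rw [hA, Finset.sum_mul]
  -- define the derivatives
  refine ⟨fun x => -θ * A * Real.exp (-θ * x) +
      2 * (-(Real.exp (-θ * x) * F x) + Real.cosh (θ * x) * (c i - G x)),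
    fun x => θ^2 * A * Real.exp (-θ * x) +
      2 * θ * (Real.exp (-θ * x) * F x + Real.sinh (θ * x) * (c i - G x)) - 2 * f i x,
    ?_, ?_, ?_, ?_⟩
  · -- first derivative
    intro x hx
    obtain ⟨hdF, hdG⟩ := hFG_deriv x hx
    have hde : HasDerivAt (fun t => Real.exp (-θ * t)) (-θ * Real.exp (-θ * x)) x := by
      have := ((hasDerivAt_id x).const_mul (-θ)).exp
      simpa [mul_comm] using this
    have hds : HasDerivAt (fun t => Real.sinh (θ * t)) (θ * Real.cosh (θ * x)) x := by
      have := ((hasDerivAt_id x).const_mul θ).sinh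
      simpa [mul_comm] using this
    have hU : HasDerivAt (fun t => A * Real.exp (-θ * t) +
        (2/θ) * (Real.exp (-θ * t) * F t + Real.sinh (θ * t) * (c i - G t)))
        (-θ * A * Real.exp (-θ * x) +
          2 * (-(Real.exp (-θ * x) * F x) + Real.cosh (θ * x) * (c i - G x))) x := by
      have h1 : HasDerivAt (fun t => A * Real.exp (-θ * t)) (A * (-θ * Real.exp (-θ * x))) x :=
        hde.const_mul A
      have h2 : HasDerivAt (fun t => Real.exp (-θ * t) * F t)
          ((-θ * Real.exp (-θ * x)) * F x + Real.exp (-θ * x) * (Real.sinh (θ * x) * f i x)) x :=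
        hde.mul hdF
      have h3 : HasDerivAt (fun t => Real.sinh (θ * t) * (c i - G t))
          ((θ * Real.cosh (θ * x)) * (c i - G x) +
            Real.sinh (θ * x) * (-(Real.exp (-θ * x) * f i x))) x :=
        hds.mul (hdG.const_sub (c i))
      have := h1.add (((h2.add h3)).const_mul (2/θ))
      refine this.congr_deriv ?_
      field_simp
      ring
    refine hU.congr_of_eventuallyEq ?_
    filter_upwards [Ioi_mem_nhds hx] with t ht
    exact (key t ht)
  · -- second derivative
    intro x hx
    obtain ⟨hdF, hdG⟩ := hFG_deriv x hx
    have hde : HasDerivAt (fun t => Real.exp (-θ * t)) (-θ * Real.exp (-θ * x)) x := by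
      have := ((hasDerivAt_id x).const_mul (-θ)).exp
      simpa [mul_comm] using this
    have hdc : HasDerivAt (fun t => Real.cosh (θ * t)) (θ * Real.sinh (θ * x)) x := by
      have := ((hasDerivAt_id x).const_mul θ).cosh
      simpa [mul_comm] using this
    have h1 : HasDerivAt (fun t => -θ * A * Real.exp (-θ * t))
        ((-θ * A) * (-θ * Real.exp (-θ * x))) x := hde.const_mul (-θ * A)
    have h2 : HasDerivAt (fun t => Real.exp (-θ * t) * F t)
        ((-θ * Real.exp (-θ * x)) * F x + Real.exp (-θ * x) * (Real.sinh (θ * x) * f i x)) x :=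
      hde.mul hdF
    have h3 : HasDerivAt (fun t => Real.cosh (θ * t) * (c i - G t))
        ((θ * Real.sinh (θ * x)) * (c i - G x) +
          Real.cosh (θ * x) * (-(Real.exp (-θ * x) * f i x))) x :=
      hdc.mul (hdG.const_sub (c i))
    have hsum := h1.add (((h2.neg.add h3)).const_mul 2)
    refine hsum.congr_deriv ?_
    beta_reduce
    have hkey2 : Real.exp (-θ * x) * Real.sinh (θ * x) +
        Real.exp (-θ * x) * Real.cosh (θ * x) = 1 := by
      have hee : Real.exp (-θ * x) * Real.exp (θ * x) = 1 := by
        rw [← Real.exp_add, show -θ * x + θ * x = 0 by ring, Real.exp_zero]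
      calc Real.exp (-θ * x) * Real.sinh (θ * x) + Real.exp (-θ * x) * Real.cosh (θ * x)
          = Real.exp (-θ * x) * Real.exp (θ * x) := by
            rw [Real.sinh_eq, Real.cosh_eq]; ring
        _ = 1 := hee
    linear_combination (-(2 * f i x)) * hkey2
  · -- continuity of u''
    have hFc : ContinuousOn F (Set.Ioi 0) := fun x hx =>
      ((hFG_deriv x hx).1.continuousAt).continuousWithinAt
    have hGc : ContinuousOn G (Set.Ioi 0) := fun x hx =>
      ((hFG_deriv x hx).2.continuousAt).continuousWithinAt
    have hfc : ContinuousOn (f i) (Set.Ioi 0) :=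
      (hf_cont i).mono (fun y hy => Set.mem_Ici.mpr (le_of_lt hy))
    have hexps : Continuous (fun x : ℝ => Real.exp (-θ * x)) :=
      Real.continuous_exp.comp (continuous_const.mul continuous_id)
    have hsinh : Continuous (fun x : ℝ => Real.sinh (θ * x)) :=
      Real.continuous_sinh.comp (continuous_const.mul continuous_id)
    apply ContinuousOn.sub
    · apply ContinuousOn.add
      · exact (continuous_const.mul hexps).continuousOn
      · exact ContinuousOn.mul continuousOn_const
          ((hexps.continuousOn.mul hFc).add
            (hsinh.continuousOn.mul (continuousOn_const.sub hGc)))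
    · exact continuousOn_const.mul hfc
  · -- the resolvent equation
    intro x hx
    rw [key x hx]
    have h2r : θ^2 = 2 * r := hθ2
    have hq : (1/2) * (θ^2 * A * Real.exp (-θ * x) +
        2 * θ * (Real.exp (-θ * x) * F x + Real.sinh (θ * x) * (c i - G x)) - 2 * f i x)
        - r * (A * Real.exp (-θ * x) +
          (2/θ) * (Real.exp (-θ * x) * F x + Real.sinh (θ * x) * (c i - G x)))
        = ((1/2) * θ^2 - r) * (A * Real.exp (-θ * x) +
            (2/θ) * (Real.exp (-θ * x) * F x + Real.sinh (θ * x) * (c i - G x))) - f i x := by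
      field_simp
      ring
    rw [hq, h2r]
    ring
end

section
/- Let f_1,…,f_n : [0,∞) → ℝ be bounded continuous functions and define u(x,i) := Σ_{k=1}^n 2p_k ∫₀^∞ g_r((x,i),(y,k)) f_k(y) dy. Then the value u(0,i) is the same for every leg i and equals (2/θ)·Σ_{k=1}^n p_k ∫₀^∞ e^{−θy} f_k(y) dy; moreover for each i the right derivative u⁺(0,i) := lim_{δ↓0} (u(δ,i) − u(0,i))/δ exists, and the Kirchhoff (gluing) condition Σ_{i=1}^n p_i · u⁺(0,i) = 0 holds. -/
open Filter Topology MeasureTheory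

lemma sinh_le_mul_exp {t : ℝ} : Real.sinh t ≤ t * Real.exp t := by
  rw [Real.sinh_eq]
  have h1 : -(2*t) + 1 ≤ Real.exp (-(2*t)) := Real.add_one_le_exp _
  have h2 : Real.exp (-(2*t)) = Real.exp (-t) * Real.exp (-t) := by
    rw [← Real.exp_add]; ring_nf
  have h3 : Real.exp (-t) * Real.exp t = 1 := by
    rw [← Real.exp_add]; simp
  nlinarith [Real.exp_pos t, Real.exp_pos (-t)]

lemma one_sub_exp_neg_le {t : ℝ} : 1 - Real.exp (-t) ≤ t := by
  have := Real.add_one_le_exp (-t)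
  linarith

/-- continuity of the Green function in `y`. -/
lemma spiderGreen_continuous (n : ℕ) (p : Fin n → ℝ) (θ δ : ℝ) (i k : Fin n) :
    Continuous (fun y => spiderGreen n p θ δ i y k) := by
  unfold spiderGreen
  split_ifs with h
  · apply Continuous.mul
    · exact continuous_const.mul
        (Real.continuous_exp.comp (continuous_const.mul (continuous_const.max continuous_id)))
    · exact (continuous_const.mul
        (Real.continuous_sinh.comp (continuous_const.mul (continuous_const.min continuous_id)))).add
        (Real.continuous_exp.comp (continuous_const.mul (continuous_const.min continuous_id)))
  · exact continuous_const.mul (Real.continuous_exp.comp (continuous_const.mul continuous_id))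

/-- value of the Green function at the origin. -/
lemma spiderGreen_zero (n : ℕ) (p : Fin n → ℝ) (θ : ℝ) (i k : Fin n) (y : ℝ) (hy : 0 ≤ y) :
    spiderGreen n p θ 0 i y k = (1/θ) * Real.exp (-θ * y) := by
  unfold spiderGreen
  split_ifs with h
  · rw [max_eq_right hy, min_eq_left hy]
    simp
  · simp

set_option maxHeartbeats 2000000 in
/-- the resolvent `u` of the Brownian spider has a leg-independent value at the
origin, its right derivatives at the origin exist on each leg, and the Kirchhoff (gluing)
condition `Σ p_i u⁺(0,i) = 0` holds. -/
theorem stmt_5 (n : ℕ) (hn : 1 ≤ n) (p : Fin n → ℝ)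
    (hp : ∀ k, 0 < p k) (hpsum : ∑ k, p k = 1)
    (r : ℝ) (hr : 0 < r) (θ : ℝ) (hθ : θ = Real.sqrt (2 * r))
    (f : Fin n → ℝ → ℝ)
    (hf_cont : ∀ k, ContinuousOn (f k) (Set.Ici 0))
    (hf_bdd : ∀ k, ∃ C, ∀ y ≥ (0:ℝ), |f k y| ≤ C)
    (u : ℝ → Fin n → ℝ)
    (hu : ∀ x i, u x i =
      ∑ k, 2 * p k * ∫ y in Set.Ioi (0:ℝ), spiderGreen n p θ x i y k * f k y) :
    (∀ i, u 0 i =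
      (2/θ) * ∑ k, p k * ∫ y in Set.Ioi (0:ℝ), Real.exp (-θ * y) * f k y) ∧
    ∃ d : Fin n → ℝ,
      (∀ i, Tendsto (fun δ => (u δ i - u 0 i) / δ) (𝓝[>] 0) (𝓝 (d i))) ∧
      ∑ i, p i * d i = 0 := by
  have hθ0 : 0 < θ := by rw [hθ]; exact Real.sqrt_pos.mpr (by linarith)
  set I : Fin n → ℝ := fun k => ∫ y in Set.Ioi (0:ℝ), Real.exp (-θ * y) * f k y with hIdef
  have hfm : ∀ k, AEStronglyMeasurable (f k) (volume.restrict (Set.Ioi 0)) := fun k =>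
    ((hf_cont k).mono Set.Ioi_subset_Ici_self).aestronglyMeasurable measurableSet_Ioi
  choose C hC using hf_bdd
  have hC0 : ∀ k, 0 ≤ C k := fun k => le_trans (abs_nonneg _) (hC k 0 le_rfl)
  -- Part 1 : value at the origin
  have hu0 : ∀ i, u 0 i = (2/θ) * ∑ k, p k * I k := by
    intro i
    rw [hu]
    have hterm : ∀ k : Fin n,
        (∫ y in Set.Ioi (0:ℝ), spiderGreen n p θ 0 i y k * f k y) = (1/θ) * I k := by
      intro k
      rw [hIdef]
      rw [← MeasureTheory.integral_const_mul]
      refine MeasureTheory.setIntegral_congr_fun measurableSet_Ioi fun y hy => ?_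
      rw [spiderGreen_zero n p θ i k y (le_of_lt hy)]; ring
    rw [Finset.mul_sum]
    exact Finset.sum_congr rfl fun k _ => by rw [hterm k]; ring
  refine ⟨fun i => (hu0 i).trans (by rw [hIdef]), ?_⟩
  -- Part 2 : right derivatives and Kirchhoff condition
  refine ⟨fun i => 2 * I i - 2 * ∑ k, p k * I k, fun i => ?_, ?_⟩
  swap
  · -- Kirchhoff identity
    calc ∑ i, p i * (2 * I i - 2 * ∑ k, p k * I k)
        = ∑ i, (2 * (p i * I i) - p i * (2 * ∑ k, p k * I k)) :=
          Finset.sum_congr rfl fun i _ => by ring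
      _ = 2 * ∑ i, p i * I i - (∑ i, p i) * (2 * ∑ k, p k * I k) := by
          rw [Finset.sum_sub_distrib, ← Finset.mul_sum, ← Finset.sum_mul]
      _ = 0 := by rw [hpsum]; ring
  -- the limit on leg i
  have hpi : (0:ℝ) < 1 / p i := one_div_pos.mpr (hp i)
  -- uniform integrable bound for the Green integrand
  have hInt : ∀ (k : Fin n) (δ : ℝ), 0 ≤ δ → δ ≤ 1 →
      IntegrableOn (fun y => spiderGreen n p θ δ i y k * f k y) (Set.Ioi 0) volume := by
    intro k δ h0 h1
    refine MeasureTheory.Integrable.mono'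
      ((exp_neg_integrableOn_Ioi 0 hθ0).const_mul
        ((1/θ) * ((1/p i) * θ * Real.exp θ + 1) * C k))
      (((spiderGreen_continuous n p θ δ i k).aestronglyMeasurable.restrict).mul (hfm k)) ?_
    rw [ae_restrict_iff' measurableSet_Ioi]
    refine ae_of_all _ fun y hy => ?_
    have hy0 : (0:ℝ) < y := hy
    rw [Real.norm_eq_abs, abs_mul]
    have hGb : |spiderGreen n p θ δ i y k|
        ≤ (1/θ) * ((1/p i) * θ * Real.exp θ + 1) * Real.exp (-θ*y) := by
      unfold spiderGreen
      split_ifs with h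
      · have hmin0 : 0 ≤ min δ y := le_min h0 hy0.le
        have hmin1 : min δ y ≤ 1 := le_trans (min_le_left _ _) h1
        have hsh0 : 0 ≤ Real.sinh (θ * min δ y) := Real.sinh_nonneg_iff.mpr (by positivity)
        have hsh : Real.sinh (θ * min δ y) ≤ θ * Real.exp θ := by
          have h2 : θ * min δ y ≤ θ := by nlinarith
          calc Real.sinh (θ * min δ y) ≤ (θ * min δ y) * Real.exp (θ * min δ y) :=
                sinh_le_mul_exp
            _ ≤ θ * Real.exp θ :=
              mul_le_mul h2 (Real.exp_le_exp.mpr h2) (Real.exp_pos _).le hθ0.le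
        have hT0 : 0 ≤ (1/p i) * Real.sinh (θ * min δ y) + Real.exp (-θ * min δ y) :=
          add_nonneg (mul_nonneg hpi.le hsh0) (Real.exp_pos _).le
        rw [abs_of_nonneg (mul_nonneg (mul_nonneg (by positivity) (Real.exp_pos _).le) hT0)]
        have hE : Real.exp (-θ * max δ y) ≤ Real.exp (-θ * y) :=
          Real.exp_le_exp.mpr (by nlinarith [le_max_right δ y])
        have hT : (1/p i) * Real.sinh (θ * min δ y) + Real.exp (-θ * min δ y)
            ≤ (1/p i) * θ * Real.exp θ + 1 := by
          have h3 : Real.exp (-θ * min δ y) ≤ 1 := Real.exp_le_one_iff.mpr (by nlinarith)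
          nlinarith
        calc (1/θ) * Real.exp (-θ * max δ y) *
              ((1/p i) * Real.sinh (θ * min δ y) + Real.exp (-θ * min δ y))
            = (1/θ) * (Real.exp (-θ * max δ y) *
              ((1/p i) * Real.sinh (θ * min δ y) + Real.exp (-θ * min δ y))) := by ring
          _ ≤ (1/θ) * (Real.exp (-θ*y) * ((1/p i) * θ * Real.exp θ + 1)) :=
              mul_le_mul_of_nonneg_left (mul_le_mul hE hT hT0 (Real.exp_pos _).le)
                (by positivity)
          _ = (1/θ) * ((1/p i) * θ * Real.exp θ + 1) * Real.exp (-θ*y) := by ring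
      · rw [abs_of_nonneg (by positivity)]
        have h2 : Real.exp (-θ * δ) ≤ 1 := Real.exp_le_one_iff.mpr (by nlinarith)
        have h3 : (0:ℝ) ≤ (1/p i) * θ * Real.exp θ := by positivity
        have h4 : (0:ℝ) ≤ 1/θ * ((1/p i) * θ * Real.exp θ) * Real.exp (-θ*y) := by positivity
        have h5 : (1/θ) * Real.exp (-θ*δ) * Real.exp (-θ*y)
            ≤ (1/θ) * 1 * Real.exp (-θ*y) :=
          mul_le_mul_of_nonneg_right (mul_le_mul_of_nonneg_left h2 (by positivity))
            (Real.exp_pos _).le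
        nlinarith
    calc |spiderGreen n p θ δ i y k| * |f k y|
        ≤ ((1/θ) * ((1/p i) * θ * Real.exp θ + 1) * Real.exp (-θ*y)) * C k :=
          mul_le_mul hGb (hC k y hy0.le) (abs_nonneg _) (by positivity)
      _ = (1/θ) * ((1/p i) * θ * Real.exp θ + 1) * C k * Real.exp (-θ*y) := by ring
  -- bound on the difference quotient
  have hKpos : (0:ℝ) < (1/p i) * Real.exp θ + 1 := by positivity
  have hexpθ1 : (1:ℝ) ≤ Real.exp θ := Real.one_le_exp hθ0.le
  have hdiffb : ∀ (k : Fin n) (δ : ℝ), 0 < δ → δ ≤ 1 → ∀ y : ℝ, 0 < y →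
      |spiderGreen n p θ δ i y k - spiderGreen n p θ 0 i y k|
        ≤ δ * (((1/p i) * Real.exp θ + 1) * Real.exp θ) * Real.exp (-θ*y) := by
    intro k δ hδ0 hδ1 y hy
    have hed : 1 - θ*δ ≤ Real.exp (-θ*δ) := by
      rw [neg_mul]; linarith [one_sub_exp_neg_le (t := θ*δ)]
    have hed1 : Real.exp (-θ*δ) ≤ 1 := Real.exp_le_one_iff.mpr (by nlinarith)
    rw [spiderGreen_zero n p θ i k y hy.le]
    unfold spiderGreen
    split_ifs with h
    · rcases le_total δ y with hdy | hdy
      · rw [max_eq_right hdy, min_eq_left hdy]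
        have hs0 : 0 ≤ Real.sinh (θ * δ) := Real.sinh_nonneg_iff.mpr (by positivity)
        have hs2 : Real.sinh (θ * δ) ≤ θ * δ * Real.exp θ := by
          calc Real.sinh (θ*δ) ≤ (θ*δ) * Real.exp (θ*δ) := sinh_le_mul_exp
            _ ≤ (θ*δ) * Real.exp θ :=
              mul_le_mul_of_nonneg_left (Real.exp_le_exp.mpr (by nlinarith)) (by positivity)
        have hre : (1/θ) * Real.exp (-θ * y) *
              ((1/p i) * Real.sinh (θ * δ) + Real.exp (-θ * δ)) - 1/θ * Real.exp (-θ*y)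
            = ((1/θ) * Real.exp (-θ*y)) *
              ((1/p i) * Real.sinh (θ * δ) + Real.exp (-θ * δ) - 1) := by ring
        rw [hre, abs_mul, abs_of_nonneg (show (0:ℝ) ≤ (1/θ) * Real.exp (-θ*y) by positivity)]
        have hinner : |(1/p i) * Real.sinh (θ * δ) + Real.exp (-θ * δ) - 1|
            ≤ θ * δ * ((1/p i) * Real.exp θ + 1) := by
          rw [abs_le]
          constructor
          · nlinarith [mul_nonneg hpi.le hs0,
              mul_nonneg (mul_nonneg hθ0.le hδ0.le)
                (mul_nonneg hpi.le (Real.exp_pos θ).le)]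
          · nlinarith [mul_le_mul_of_nonneg_left hs2 hpi.le, mul_pos hθ0 hδ0]
        calc ((1/θ) * Real.exp (-θ*y)) *
              |(1/p i) * Real.sinh (θ * δ) + Real.exp (-θ * δ) - 1|
            ≤ ((1/θ) * Real.exp (-θ*y)) * (θ * δ * ((1/p i) * Real.exp θ + 1)) :=
              mul_le_mul_of_nonneg_left hinner (by positivity)
          _ = (θ * (1/θ)) * (δ * ((1/p i) * Real.exp θ + 1) * Real.exp (-θ*y)) := by ring
          _ = δ * ((1/p i) * Real.exp θ + 1) * Real.exp (-θ*y) := by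
              rw [mul_one_div_cancel hθ0.ne', one_mul]
          _ ≤ δ * (((1/p i) * Real.exp θ + 1) * Real.exp θ) * Real.exp (-θ*y) := by
              nlinarith [mul_nonneg (mul_pos (mul_pos hδ0 hKpos)
                (Real.exp_pos (-θ*y))).le (by linarith : (0:ℝ) ≤ Real.exp θ - 1)]
      · rw [max_eq_left hdy, min_eq_right hdy]
        have hy1 : y ≤ 1 := hdy.trans hδ1
        have hs0 : 0 ≤ Real.sinh (θ * y) := Real.sinh_nonneg_iff.mpr (by positivity)
        have hs2 : Real.sinh (θ * y) ≤ θ * δ * Real.exp θ := by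
          calc Real.sinh (θ*y) ≤ (θ*y) * Real.exp (θ*y) := sinh_le_mul_exp
            _ ≤ (θ*δ) * Real.exp θ :=
              mul_le_mul (by nlinarith) (Real.exp_le_exp.mpr (by nlinarith))
                (Real.exp_pos _).le (by positivity)
        have hey1 : Real.exp (-θ*y) ≤ 1 := Real.exp_le_one_iff.mpr (by nlinarith)
        have hey0 : (0:ℝ) < Real.exp (-θ*y) := Real.exp_pos _
        have hre : (1/θ) * Real.exp (-θ * δ) *
              ((1/p i) * Real.sinh (θ * y) + Real.exp (-θ * y)) - 1/θ * Real.exp (-θ*y)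
            = (1/θ) * (Real.exp (-θ*δ) *
              ((1/p i) * Real.sinh (θ * y) + Real.exp (-θ*y)) - Real.exp (-θ*y)) := by ring
        rw [hre, abs_mul, abs_of_nonneg (show (0:ℝ) ≤ (1/θ) by positivity)]
        have hinner : |Real.exp (-θ*δ) *
              ((1/p i) * Real.sinh (θ * y) + Real.exp (-θ*y)) - Real.exp (-θ*y)|
            ≤ θ * δ * ((1/p i) * Real.exp θ + 1) := by
          rw [abs_le]
          constructor
          · nlinarith [mul_nonneg (Real.exp_pos (-θ*δ)).le (mul_nonneg hpi.le hs0),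
              mul_le_mul_of_nonneg_right hed hey0.le,
              mul_le_mul_of_nonneg_left hey1 (mul_pos hθ0 hδ0).le,
              mul_nonneg (mul_pos hθ0 hδ0).le (mul_nonneg hpi.le (Real.exp_pos θ).le)]
          · nlinarith [mul_le_mul_of_nonneg_right hed1
                (add_nonneg (mul_nonneg hpi.le hs0) hey0.le),
              mul_le_mul_of_nonneg_left hs2 hpi.le, mul_pos hθ0 hδ0]
        have hone : (1:ℝ) ≤ Real.exp θ * Real.exp (-θ*y) := by
          rw [← Real.exp_add]
          exact Real.one_le_exp (by nlinarith)
        calc (1/θ) * |Real.exp (-θ*δ) *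
              ((1/p i) * Real.sinh (θ * y) + Real.exp (-θ*y)) - Real.exp (-θ*y)|
            ≤ (1/θ) * (θ * δ * ((1/p i) * Real.exp θ + 1)) :=
              mul_le_mul_of_nonneg_left hinner (by positivity)
          _ = (θ * (1/θ)) * (δ * ((1/p i) * Real.exp θ + 1)) := by ring
          _ = δ * ((1/p i) * Real.exp θ + 1) := by
              rw [mul_one_div_cancel hθ0.ne', one_mul]
          _ ≤ δ * (((1/p i) * Real.exp θ + 1) * Real.exp θ) * Real.exp (-θ*y) := by
              nlinarith [mul_pos hδ0 hKpos, hone]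
    · have hre : (1/θ) * Real.exp (-θ * δ) * Real.exp (-θ * y) - 1/θ * Real.exp (-θ*y)
          = ((1/θ) * Real.exp (-θ*y)) * (Real.exp (-θ*δ) - 1) := by ring
      rw [hre, abs_mul, abs_of_nonneg (show (0:ℝ) ≤ (1/θ) * Real.exp (-θ*y) by positivity)]
      have habs : |Real.exp (-θ*δ) - 1| ≤ θ * δ := by
        rw [abs_le]; constructor
        · linarith
        · nlinarith [mul_pos hθ0 hδ0]
      have hKe : (1:ℝ) ≤ ((1/p i) * Real.exp θ + 1) * Real.exp θ := by
        nlinarith [mul_nonneg hpi.le (Real.exp_pos θ).le]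
      calc ((1/θ) * Real.exp (-θ*y)) * |Real.exp (-θ*δ) - 1|
          ≤ ((1/θ) * Real.exp (-θ*y)) * (θ * δ) :=
            mul_le_mul_of_nonneg_left habs (by positivity)
        _ = (θ * (1/θ)) * (δ * Real.exp (-θ*y)) := by ring
        _ = δ * Real.exp (-θ*y) := by rw [mul_one_div_cancel hθ0.ne', one_mul]
        _ ≤ δ * (((1/p i) * Real.exp θ + 1) * Real.exp θ) * Real.exp (-θ*y) := by
            nlinarith [mul_pos hδ0 (Real.exp_pos (-θ*y))]
  -- pointwise limit of the difference quotient
  have hlim : ∀ (k : Fin n) (y : ℝ), 0 < y →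
      Tendsto (fun δ => ((spiderGreen n p θ δ i y k - spiderGreen n p θ 0 i y k)/δ) * f k y)
        (𝓝[>] (0:ℝ))
        (𝓝 (((if i = k then 1/p i else 0) - 1) * (Real.exp (-θ*y) * f k y))) := by
    intro k y hy
    set b : ℝ := if i = k then 1/p i else 0 with hb
    have hh : HasDerivAt (fun t : ℝ => b * Real.sinh (θ*t) + Real.exp (-(θ*t)))
        (b*θ - θ) 0 := by
      have h1 : HasDerivAt (fun t : ℝ => θ*t) θ 0 := by
        simpa using (hasDerivAt_id (0:ℝ)).const_mul θ
      have h2 := (h1.sinh).const_mul b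
      have h3 := (h1.neg).exp
      have h4 := h2.add h3
      have : b * (Real.cosh (θ * 0) * θ) + Real.exp (-(θ * 0)) * -θ = b*θ - θ := by
        simp [Real.cosh_zero]; ring
      simp only [Pi.neg_apply] at h4
      rw [this] at h4
      exact h4
    have hslope : Tendsto (slope (fun t : ℝ => b * Real.sinh (θ*t) + Real.exp (-(θ*t))) 0)
        (𝓝[>] 0) (𝓝 (b*θ - θ)) :=
      (hasDerivAt_iff_tendsto_slope.mp hh).mono_left
        (nhdsWithin_mono 0 fun x hx => ne_of_gt hx)
    have hc : Tendsto (fun δ => ((1/θ) * Real.exp (-θ*y) * f k y) *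
        slope (fun t : ℝ => b * Real.sinh (θ*t) + Real.exp (-(θ*t))) 0 δ) (𝓝[>] 0)
        (𝓝 (((1/θ) * Real.exp (-θ*y) * f k y) * (b*θ - θ))) :=
      hslope.const_mul _
    have hval : ((1/θ) * Real.exp (-θ*y) * f k y) * (b*θ - θ)
        = (b - 1) * (Real.exp (-θ*y) * f k y) := by
      field_simp
    rw [← hval]
    refine hc.congr' ?_
    filter_upwards [Ioo_mem_nhdsGT_of_mem (Set.mem_Ico.mpr ⟨le_rfl, hy⟩)] with δ hδ
    obtain ⟨hδ0, hδy⟩ := hδ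
    have hδne : δ ≠ 0 := ne_of_gt hδ0
    have hG : spiderGreen n p θ δ i y k =
        (1/θ) * Real.exp (-θ*y) * (b * Real.sinh (θ*δ) + Real.exp (-(θ*δ))) := by
      unfold spiderGreen
      split_ifs with h
      · have hb' : b = 1/p i := by rw [hb, if_pos h]
        rw [hb', max_eq_right hδy.le, min_eq_left hδy.le]
        ring_nf
      · have hb' : b = 0 := by rw [hb, if_neg h]
        rw [hb', neg_mul]
        ring
    rw [slope_def_field, hG, spiderGreen_zero n p θ i k y hy.le]
    simp only [mul_zero, Real.sinh_zero, neg_zero, Real.exp_zero, sub_zero]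
    field_simp
    ring
  -- dominated convergence for each leg
  have hDCT : ∀ k : Fin n, Tendsto
      (fun δ => ∫ y in Set.Ioi (0:ℝ),
        ((spiderGreen n p θ δ i y k - spiderGreen n p θ 0 i y k)/δ) * f k y)
      (𝓝[>] (0:ℝ))
      (𝓝 (∫ y in Set.Ioi (0:ℝ),
        ((if i = k then 1/p i else 0) - 1) * (Real.exp (-θ*y) * f k y))) := by
    intro k
    refine MeasureTheory.tendsto_integral_filter_of_dominated_convergence
      (fun y => ((((1/p i) * Real.exp θ + 1) * Real.exp θ) * C k) * Real.exp (-θ*y))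
      ?_ ?_ ?_ ?_
    · refine Eventually.of_forall fun δ => ?_
      exact ((((spiderGreen_continuous n p θ δ i k).sub
        (spiderGreen_continuous n p θ 0 i k)).div_const δ).aestronglyMeasurable.restrict).mul
        (hfm k)
    · filter_upwards [Ioc_mem_nhdsGT_of_mem (Set.mem_Ico.mpr ⟨le_rfl, zero_lt_one⟩)]
        with δ hδ
      rw [ae_restrict_iff' measurableSet_Ioi]
      refine ae_of_all _ fun y hy => ?_
      have hy0 : (0:ℝ) < y := hy
      rw [Real.norm_eq_abs, abs_mul, abs_div, abs_of_pos hδ.1]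
      have h6 : |spiderGreen n p θ δ i y k - spiderGreen n p θ 0 i y k| / δ
          ≤ (((1/p i) * Real.exp θ + 1) * Real.exp θ) * Real.exp (-θ*y) := by
        rw [div_le_iff₀ hδ.1]
        calc |spiderGreen n p θ δ i y k - spiderGreen n p θ 0 i y k|
            ≤ δ * (((1/p i) * Real.exp θ + 1) * Real.exp θ) * Real.exp (-θ*y) :=
              hdiffb k δ hδ.1 hδ.2 y hy0
          _ = (((1/p i) * Real.exp θ + 1) * Real.exp θ) * Real.exp (-θ*y) * δ := by ring
      calc |spiderGreen n p θ δ i y k - spiderGreen n p θ 0 i y k| / δ * |f k y|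
          ≤ ((((1/p i) * Real.exp θ + 1) * Real.exp θ) * Real.exp (-θ*y)) * C k :=
            mul_le_mul h6 (hC k y hy0.le) (abs_nonneg _) (by positivity)
        _ = ((((1/p i) * Real.exp θ + 1) * Real.exp θ) * C k) * Real.exp (-θ*y) := by ring
    · exact (exp_neg_integrableOn_Ioi 0 hθ0).const_mul _
    · rw [ae_restrict_iff' measurableSet_Ioi]
      exact ae_of_all _ fun y hy => hlim k y hy
  -- sum over the legs
  have hTsum : Tendsto (fun δ => ∑ k, 2 * p k * ∫ y in Set.Ioi (0:ℝ),
      ((spiderGreen n p θ δ i y k - spiderGreen n p θ 0 i y k)/δ) * f k y) (𝓝[>] (0:ℝ))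
      (𝓝 (∑ k, 2 * p k * ∫ y in Set.Ioi (0:ℝ),
        ((if i = k then 1/p i else 0) - 1) * (Real.exp (-θ*y) * f k y))) :=
    tendsto_finset_sum _ fun k _ => (hDCT k).const_mul (2 * p k)
  -- identify the limit
  have hIk : ∀ k : Fin n, (∫ y in Set.Ioi (0:ℝ), Real.exp (-θ*y) * f k y) = I k :=
    fun k => by rw [hIdef]
  have hval : (∑ k, 2 * p k * ∫ y in Set.Ioi (0:ℝ),
        ((if i = k then 1/p i else 0) - 1) * (Real.exp (-θ*y) * f k y))
      = 2 * I i - 2 * ∑ k, p k * I k := by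
    have hterm : ∀ k : Fin n, 2 * p k * ∫ y in Set.Ioi (0:ℝ),
          ((if i = k then 1/p i else 0) - 1) * (Real.exp (-θ*y) * f k y)
        = (if i = k then 2 * I i else 0) - 2 * (p k * I k) := by
      intro k
      rw [MeasureTheory.integral_const_mul, hIk k]
      split_ifs with h
      · subst h
        have hpne : p i ≠ 0 := (hp i).ne'
        field_simp
      · ring
    rw [Finset.sum_congr rfl fun k _ => hterm k, Finset.sum_sub_distrib]
    congr 1
    · rw [Finset.sum_ite_eq]
      simp
    · rw [← Finset.mul_sum]
  -- eventual equality of the difference quotient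
  have hquot : (fun δ => ∑ k, 2 * p k * ∫ y in Set.Ioi (0:ℝ),
        ((spiderGreen n p θ δ i y k - spiderGreen n p θ 0 i y k)/δ) * f k y)
      =ᶠ[𝓝[>] (0:ℝ)] (fun δ => (u δ i - u 0 i) / δ) := by
    filter_upwards [Ioc_mem_nhdsGT_of_mem (Set.mem_Ico.mpr ⟨le_rfl, zero_lt_one⟩)]
      with δ hδ
    rw [hu δ i, hu 0 i, ← Finset.sum_sub_distrib, Finset.sum_div]
    refine Finset.sum_congr rfl fun k _ => ?_
    have h1 : (∫ y in Set.Ioi (0:ℝ),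
          ((spiderGreen n p θ δ i y k - spiderGreen n p θ 0 i y k)/δ) * f k y)
        = ((∫ y in Set.Ioi (0:ℝ), spiderGreen n p θ δ i y k * f k y)
            - ∫ y in Set.Ioi (0:ℝ), spiderGreen n p θ 0 i y k * f k y) / δ := by
      rw [← MeasureTheory.integral_sub (hInt k δ hδ.1.le hδ.2) (hInt k 0 le_rfl zero_le_one),
        ← MeasureTheory.integral_div]
      exact MeasureTheory.integral_congr_ae (ae_of_all _ fun y => by ring)
    rw [h1]
    ring
  have hfinal := Tendsto.congr' hquot hTsum
  rw [hval] at hfinal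
  exact hfinal
end

section
/- Let f be the function represented by a representing datum (σ_1,…,σ_n, a_1,…,a_n, s₀). Then for every leg i the right derivative f⁺(0,i) exists and equals (θ/p_i)·(σ_i((0,∞)) + a_i) − θ, and consequently Σ_{i=1}^n p_i · f⁺(0,i) = −θ·s₀ ≤ 0. -/
open Filter Topology MeasureTheory

/-- Martin kernel of the Brownian spider normalized at the origin, for poles `(y,k)` with
`y > 0`. -/
noncomputable def martinKernel0 (n : ℕ) (p : Fin n → ℝ) (θ : ℝ)
    (x : ℝ) (i : Fin n) (y : ℝ) (k : Fin n) : ℝ :=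
  if i = k then
    (if x ≤ y then (1 / p i) * Real.sinh (θ * x) + Real.exp (-θ * x)
     else Real.exp (-θ * x) * (1 + (1 / p i) * Real.exp (θ * y) * Real.sinh (θ * y)))
  else Real.exp (-θ * x)

/-- Boundary Martin kernel of the Brownian spider normalized at the origin, for boundary
points `(∞,k)`. -/
noncomputable def martinKernel0Inf (n : ℕ) (p : Fin n → ℝ) (θ : ℝ)
    (x : ℝ) (i k : Fin n) : ℝ :=
  if i = k then (1 / p i) * Real.sinh (θ * x) + Real.exp (-θ * x)
  else Real.exp (-θ * x)

set_option maxHeartbeats 2000000 in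
/-- for a function `f` represented by a representing datum
`(σ_1,…,σ_n, a_1,…,a_n, s₀)`, the right derivative at the origin on leg `i` exists and
equals `(θ/p_i)(σ_i((0,∞)) + a_i) − θ`, whence `Σ p_i f⁺(0,i) = −θ·s₀ ≤ 0`. -/
theorem stmt_8 (n : ℕ) (hn : 1 ≤ n) (p : Fin n → ℝ)
    (hp : ∀ i, 0 < p i) (hpsum : ∑ i, p i = 1)
    (r : ℝ) (hr : 0 < r) (θ : ℝ) (hθ : θ = Real.sqrt (2 * r))
    (σ : Fin n → Measure ℝ) [∀ k, IsFiniteMeasure (σ k)]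
    (hσsupp : ∀ k, σ k (Set.Iic 0) = 0)
    (a : Fin n → ℝ) (ha : ∀ k, 0 ≤ a k) (s₀ : ℝ) (hs₀ : 0 ≤ s₀)
    (hnorm : s₀ + ∑ k, ((σ k (Set.Ioi 0)).toReal + a k) = 1)
    (f : ℝ → Fin n → ℝ)
    (hf : ∀ x i, f x i = s₀ * Real.exp (-θ * x) +
      ∑ k, ((∫ y in Set.Ioi (0:ℝ), martinKernel0 n p θ x i y k ∂(σ k)) +
        a k * martinKernel0Inf n p θ x i k)) :
    (∀ i, Tendsto (fun δ => (f δ i - f 0 i) / δ) (𝓝[>] 0)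
      (𝓝 ((θ / p i) * ((σ i (Set.Ioi 0)).toReal + a i) - θ))) ∧
    ∑ i, p i * ((θ / p i) * ((σ i (Set.Ioi 0)).toReal + a i) - θ) = -θ * s₀ ∧
    -θ * s₀ ≤ 0 := by
  have hθ0 : 0 < θ := hθ ▸ Real.sqrt_pos.mpr (by linarith)
  have hSsum : ∑ k, ((σ k (Set.Ioi 0)).toReal + a k) = 1 - s₀ := by linarith
  refine ⟨?_, ?_, ?_⟩
  · -- the main limit statement
    intro i
    set S : ℝ := (σ i (Set.Ioi 0)).toReal with hS
    -- value at 0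
    have hker0 : ∀ k, (∫ y in Set.Ioi (0:ℝ), martinKernel0 n p θ 0 i y k ∂(σ k))
        = (σ k (Set.Ioi 0)).toReal := by
      intro k
      rw [setIntegral_congr_fun measurableSet_Ioi (g := fun _ => (1:ℝ))
        (fun y hy => by
          unfold martinKernel0
          split_ifs with h1 h2
          · simp
          · exact absurd (le_of_lt hy) h2
          · simp)]
      rw [setIntegral_const]; simp; rfl
    have hf0 : f 0 i = 1 := by
      have hInfK : ∀ k, martinKernel0Inf n p θ 0 i k = 1 := by
        intro k; unfold martinKernel0Inf; split_ifs <;> simp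
      rw [hf]
      simp only [hker0, hInfK, mul_one, mul_zero, neg_zero, Real.exp_zero]
      linarith [hnorm]
    -- remainder term
    set R : ℝ → ℝ → ℝ := fun δ y => martinKernel0 n p θ δ i y i
      - ((1 / p i) * Real.sinh (θ * δ) + Real.exp (-θ * δ)) with hR
    -- integrability of the kernel on leg i
    have hInt : ∀ δ : ℝ, 0 < δ →
        IntegrableOn (fun y => martinKernel0 n p θ δ i y i) (Set.Ioi 0) (σ i) := by
      intro δ hδ
      have hmeas : Measurable (fun y => martinKernel0 n p θ δ i y i) := by
        have hfun : (fun y => martinKernel0 n p θ δ i y i)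
            = fun y : ℝ => if δ ≤ y then (1 / p i) * Real.sinh (θ * δ) + Real.exp (-θ * δ)
              else Real.exp (-θ * δ) * (1 + (1 / p i) * Real.exp (θ * y) * Real.sinh (θ * y)) := by
          funext y; unfold martinKernel0; rw [if_pos rfl]
        rw [hfun]
        exact Measurable.ite (measurableSet_Ici : MeasurableSet {y : ℝ | δ ≤ y})
          measurable_const (by fun_prop)
      set C : ℝ := (1 / p i) * Real.sinh (θ * δ) + Real.exp (-θ * δ)
        + Real.exp (-θ * δ) * (1 + (1 / p i) * Real.exp (θ * δ) * Real.sinh (θ * δ)) with hC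
      have hbd : ∀ y ∈ Set.Ioi (0:ℝ), ‖martinKernel0 n p θ δ i y i‖ ≤ C := by
        intro y hy
        have hpi := hp i
        have hpi' : (0:ℝ) < 1 / p i := by positivity
        have hsd : 0 ≤ Real.sinh (θ * δ) :=
          Real.sinh_nonneg_iff.mpr (mul_nonneg hθ0.le hδ.le)
        have he0 : 0 < Real.exp (-θ*δ) := Real.exp_pos _
        have heδ : 0 < Real.exp (θ*δ) := Real.exp_pos _
        have hq1 : 0 ≤ 1 / p i * Real.sinh (θ * δ) := mul_nonneg hpi'.le hsd
        have hq2 : 0 ≤ 1 / p i * Real.exp (θ * δ) * Real.sinh (θ * δ) := by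
          apply mul_nonneg (mul_nonneg hpi'.le heδ.le) hsd
        have hq3 : 0 ≤ Real.exp (-θ * δ)
            * (1 + 1 / p i * Real.exp (θ * δ) * Real.sinh (θ * δ)) :=
          mul_nonneg he0.le (by linarith)
        unfold martinKernel0
        rw [if_pos rfl]
        split_ifs with h
        · rw [Real.norm_eq_abs, abs_of_nonneg (by linarith)]
          rw [hC]; linarith
        · push_neg at h
          have hy0 : (0:ℝ) < y := hy
          have hey : Real.exp (θ * y) ≤ Real.exp (θ * δ) :=
            Real.exp_le_exp.mpr (by nlinarith)
          have hsy : Real.sinh (θ * y) ≤ Real.sinh (θ * δ) :=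
            Real.sinh_le_sinh.mpr (by nlinarith)
          have hsy0 : 0 ≤ Real.sinh (θ * y) :=
            Real.sinh_nonneg_iff.mpr (mul_nonneg hθ0.le hy0.le)
          have hey0 : 0 < Real.exp (θ*y) := Real.exp_pos _
          have hval0 : 0 ≤ 1 / p i * Real.exp (θ * y) * Real.sinh (θ * y) :=
            mul_nonneg (mul_nonneg hpi'.le hey0.le) hsy0
          rw [Real.norm_eq_abs, abs_of_nonneg (mul_nonneg he0.le (by linarith))]
          have key : 1 / p i * Real.exp (θ * y) * Real.sinh (θ * y)
              ≤ 1 / p i * Real.exp (θ * δ) * Real.sinh (θ * δ) := by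
            have h1 : Real.exp (θ * y) * Real.sinh (θ * y)
                ≤ Real.exp (θ * δ) * Real.sinh (θ * δ) := by nlinarith
            nlinarith
          have hmono : Real.exp (-θ*δ) * (1 + 1 / p i * Real.exp (θ * y) * Real.sinh (θ * y))
              ≤ Real.exp (-θ*δ) * (1 + 1 / p i * Real.exp (θ * δ) * Real.sinh (θ * δ)) :=
            mul_le_mul_of_nonneg_left (by linarith) he0.le
          rw [hC]; linarith
      exact (integrableOn_const (measure_lt_top _ _).ne).mono'
        hmeas.aestronglyMeasurable
        ((ae_restrict_iff' measurableSet_Ioi).mpr (ae_of_all _ hbd))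
    have hRint : ∀ δ : ℝ, 0 < δ → IntegrableOn (fun y => R δ y) (Set.Ioi 0) (σ i) := by
      intro δ hδ
      exact (hInt δ hδ).sub (integrableOn_const (measure_lt_top _ _).ne)
    -- splitting the integral on leg i
    have hsplit : ∀ δ : ℝ, 0 < δ →
        (∫ y in Set.Ioi (0:ℝ), martinKernel0 n p θ δ i y i ∂(σ i))
        = ((1 / p i) * Real.sinh (θ * δ) + Real.exp (-θ * δ)) * S
          + ∫ y in Set.Ioi (0:ℝ), R δ y ∂(σ i) := by
      intro δ hδ
      have : (∫ y in Set.Ioi (0:ℝ), R δ y ∂(σ i))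
          = (∫ y in Set.Ioi (0:ℝ), martinKernel0 n p θ δ i y i ∂(σ i))
            - S * ((1 / p i) * Real.sinh (θ * δ) + Real.exp (-θ * δ)) := by
        simp only [hR]
        rw [integral_sub (hInt δ hδ) (integrableOn_const (measure_lt_top _ _).ne),
          setIntegral_const, smul_eq_mul]; rfl
      rw [this]; ring
    -- bound on the remainder integral
    have hRbound : ∀ δ : ℝ, 0 < δ →
        |∫ y in Set.Ioi (0:ℝ), R δ y ∂(σ i)|
          ≤ (1 / p i) * Real.sinh (θ * δ) * (σ i (Set.Ioo 0 δ)).toReal := by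
      intro δ hδ
      have hpi := hp i
      have hpi' : (0:ℝ) < 1 / p i := by positivity
      have hsd : 0 ≤ Real.sinh (θ * δ) :=
        Real.sinh_nonneg_iff.mpr (mul_nonneg hθ0.le hδ.le)
      have hsplitset : Set.Ioo (0:ℝ) δ ∪ Set.Ici δ = Set.Ioi 0 :=
        Set.Ioo_union_Ici_eq_Ioi hδ
      have hdisj : Disjoint (Set.Ioo (0:ℝ) δ) (Set.Ici δ) :=
        Set.disjoint_left.mpr fun y hy hy' => absurd hy.2 (not_lt.mpr hy')
      have h1 : (∫ y in Set.Ioi (0:ℝ), R δ y ∂(σ i))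
          = (∫ y in Set.Ioo (0:ℝ) δ, R δ y ∂(σ i)) + ∫ y in Set.Ici δ, R δ y ∂(σ i) := by
        rw [← hsplitset]
        exact setIntegral_union hdisj measurableSet_Ici
          ((hRint δ hδ).mono_set (hsplitset ▸ Set.subset_union_left))
          ((hRint δ hδ).mono_set (hsplitset ▸ Set.subset_union_right))
      have h2 : (∫ y in Set.Ici δ, R δ y ∂(σ i)) = 0 := by
        rw [setIntegral_congr_fun measurableSet_Ici (g := fun _ => (0:ℝ))
          (fun y hy => by
            simp only [hR]; unfold martinKernel0
            rw [if_pos rfl, if_pos (show δ ≤ y from hy)]; ring)]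
        simp
      have h3 : ‖∫ y in Set.Ioo (0:ℝ) δ, R δ y ∂(σ i)‖
          ≤ ((1 / p i) * Real.sinh (θ * δ)) * (σ i (Set.Ioo 0 δ)).toReal := by
        apply norm_setIntegral_le_of_norm_le_const (measure_lt_top _ _)
        intro y hy
        have hy0 : (0:ℝ) < y := hy.1
        have hyδ : y < δ := hy.2
        have hey : Real.exp (-θ*δ) * Real.exp (θ * y) ≤ 1 := by
          rw [← Real.exp_add]
          exact Real.exp_le_one_iff.mpr (by nlinarith)
        have hsy : Real.sinh (θ * y) ≤ Real.sinh (θ * δ) :=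
          Real.sinh_le_sinh.mpr (by nlinarith)
        have hsy0 : 0 ≤ Real.sinh (θ * y) :=
          Real.sinh_nonneg_iff.mpr (mul_nonneg hθ0.le hy0.le)
        have he0 : 0 < Real.exp (-θ*δ) := Real.exp_pos _
        have hey0 : 0 < Real.exp (θ*y) := Real.exp_pos _
        simp only [hR]
        unfold martinKernel0
        rw [if_pos rfl, if_neg (not_le.mpr hyδ), Real.norm_eq_abs]
        rw [abs_le]
        have h0 : 0 ≤ Real.exp (-θ*δ) * ((1 / p i) * Real.exp (θ * y) * Real.sinh (θ * y)) :=
          mul_nonneg he0.le (mul_nonneg (mul_nonneg hpi'.le hey0.le) hsy0)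
        have hexp : Real.exp (-θ*δ) * (1 + (1 / p i) * Real.exp (θ * y) * Real.sinh (θ * y))
            = Real.exp (-θ*δ)
              + Real.exp (-θ*δ) * ((1 / p i) * Real.exp (θ * y) * Real.sinh (θ * y)) := by
          ring
        have h01 : 0 ≤ 1 / p i * Real.sinh (θ * δ) := mul_nonneg hpi'.le hsd
        constructor
        · linarith
        · have key : Real.exp (-θ*δ) * (Real.exp (θ * y) * Real.sinh (θ * y))
              ≤ Real.sinh (θ * δ) := by
            nlinarith [mul_le_mul_of_nonneg_right hey hsy0]
          have hmul := mul_le_mul_of_nonneg_left key hpi'.le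
          have hre : Real.exp (-θ*δ) * ((1 / p i) * Real.exp (θ * y) * Real.sinh (θ * y))
              = (1 / p i) * (Real.exp (-θ*δ) * (Real.exp (θ * y) * Real.sinh (θ * y))) := by
            ring
          linarith
      calc |∫ y in Set.Ioi (0:ℝ), R δ y ∂(σ i)|
          = ‖∫ y in Set.Ioo (0:ℝ) δ, R δ y ∂(σ i)‖ := by
            rw [h1, h2, add_zero, Real.norm_eq_abs]
        _ ≤ _ := h3
    -- limit lemmas
    have hslope1 : Tendsto (fun δ : ℝ => (Real.exp (-θ*δ) - 1)/δ) (𝓝[>](0:ℝ)) (𝓝 (-θ)) := by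
      have hd1 : HasDerivAt (fun x : ℝ => Real.exp (-θ * x)) (-θ) 0 := by
        simpa using ((hasDerivAt_id (0:ℝ)).const_mul (-θ)).exp
      have h := hasDerivAt_iff_tendsto_slope.mp hd1
      have h2 := h.mono_left
        (nhdsWithin_mono 0 (fun y hy => ne_of_gt hy : Set.Ioi (0:ℝ) ⊆ {(0:ℝ)}ᶜ))
      refine h2.congr fun δ => ?_
      simp [slope_def_field]
    have hslope2 : Tendsto (fun δ : ℝ => Real.sinh (θ*δ)/δ) (𝓝[>](0:ℝ)) (𝓝 θ) := by
      have hd1 : HasDerivAt (fun x : ℝ => Real.sinh (θ * x)) θ 0 := by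
        simpa using ((hasDerivAt_id (0:ℝ)).const_mul θ).sinh
      have h := hasDerivAt_iff_tendsto_slope.mp hd1
      have h2 := h.mono_left
        (nhdsWithin_mono 0 (fun y hy => ne_of_gt hy : Set.Ioi (0:ℝ) ⊆ {(0:ℝ)}ᶜ))
      refine h2.congr fun δ => ?_
      simp [slope_def_field]
    have hmeaslim : Tendsto (fun δ => (σ i (Set.Ioo 0 δ)).toReal) (𝓝[>](0:ℝ)) (𝓝 0) := by
      have hμ : Tendsto (fun δ => σ i (Set.Ioo 0 δ)) (𝓝[>](0:ℝ)) (𝓝 0) := by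
        have h := tendsto_measure_biInter_gt (μ := σ i) (s := fun δ => Set.Ioo 0 δ) (a := 0)
          (fun r hr => measurableSet_Ioo.nullMeasurableSet)
          (fun u v hu huv => Set.Ioo_subset_Ioo le_rfl huv)
          ⟨1, one_pos, (measure_lt_top _ _).ne⟩
        have he : ⋂ r > (0:ℝ), Set.Ioo 0 r = ∅ := by
          ext x
          simp only [Set.mem_iInter, Set.mem_empty_iff_false, iff_false, Set.mem_Ioo]
          intro hx
          exact absurd (hx x (hx 1 one_pos).1).2 (lt_irrefl x)
        simpa [he, Function.comp_def] using h
      have := (ENNReal.tendsto_toReal ENNReal.zero_ne_top).comp hμ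
      simpa [Function.comp_def] using this
    -- the remainder term vanishes in the limit
    have hRlim : Tendsto (fun δ => (∫ y in Set.Ioi (0:ℝ), R δ y ∂(σ i))/δ)
        (𝓝[>](0:ℝ)) (𝓝 0) := by
      apply squeeze_zero_norm'
        (a := fun δ => (1 / p i) * (Real.sinh (θ*δ)/δ) * (σ i (Set.Ioo 0 δ)).toReal)
      · filter_upwards [self_mem_nhdsWithin] with δ hδ
        have hδ0 : (0:ℝ) < δ := hδ
        rw [Real.norm_eq_abs, abs_div, abs_of_pos hδ0]
        have := (div_le_div_iff_of_pos_right hδ0).mpr (hRbound δ hδ0)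
        calc |∫ y in Set.Ioi (0:ℝ), R δ y ∂(σ i)| / δ
            ≤ ((1 / p i) * Real.sinh (θ * δ) * (σ i (Set.Ioo 0 δ)).toReal) / δ := this
          _ = (1 / p i) * (Real.sinh (θ*δ)/δ) * (σ i (Set.Ioo 0 δ)).toReal := by ring
      · have := ((hslope2.const_mul (1 / p i)).mul hmeaslim)
        simpa using this
    -- eventual formula for the difference quotient
    have hEq : ∀ᶠ δ in 𝓝[>](0:ℝ),
        (f δ i - f 0 i)/δ = (Real.exp (-θ*δ) - 1)/δ
          + ((1 / p i) * (S + a i)) * (Real.sinh (θ*δ)/δ)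
          + (∫ y in Set.Ioi (0:ℝ), R δ y ∂(σ i))/δ := by
      filter_upwards [self_mem_nhdsWithin] with δ hδ
      have hδ0 : (0:ℝ) < δ := hδ
      have hterm : ∀ k : Fin n,
          ((∫ y in Set.Ioi (0:ℝ), martinKernel0 n p θ δ i y k ∂(σ k))
            + a k * martinKernel0Inf n p θ δ i k)
          = Real.exp (-θ*δ) * ((σ k (Set.Ioi 0)).toReal + a k)
            + (if k = i then (1 / p i) * Real.sinh (θ * δ) * (S + a i)
                + ∫ y in Set.Ioi (0:ℝ), R δ y ∂(σ i) else 0) := by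
        intro k
        by_cases hk : k = i
        · subst hk
          rw [hsplit δ hδ0]
          have hInfK : martinKernel0Inf n p θ δ k k
              = (1 / p k) * Real.sinh (θ * δ) + Real.exp (-θ * δ) := by
            unfold martinKernel0Inf; rw [if_pos rfl]
          rw [hInfK, if_pos rfl]
          ring
        · have hik : ¬ (i = k) := fun h => hk h.symm
          have hker : (∫ y in Set.Ioi (0:ℝ), martinKernel0 n p θ δ i y k ∂(σ k))
              = (σ k (Set.Ioi 0)).toReal * Real.exp (-θ*δ) := by
            rw [setIntegral_congr_fun measurableSet_Ioi
              (g := fun _ => Real.exp (-θ*δ))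
              (fun y hy => by unfold martinKernel0; rw [if_neg hik])]
            rw [setIntegral_const, smul_eq_mul]; rfl
          have hInfK : martinKernel0Inf n p θ δ i k = Real.exp (-θ*δ) := by
            unfold martinKernel0Inf; rw [if_neg hik]
          rw [hker, hInfK, if_neg hk]
          ring
      have hfδ : f δ i = Real.exp (-θ*δ)
          + ((1 / p i) * Real.sinh (θ * δ) * (S + a i)
            + ∫ y in Set.Ioi (0:ℝ), R δ y ∂(σ i)) := by
        rw [hf]
        rw [Finset.sum_congr rfl (fun k _ => hterm k), Finset.sum_add_distrib,
          Finset.sum_ite_eq' Finset.univ i, if_pos (Finset.mem_univ i),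
          ← Finset.mul_sum, hSsum]
        ring
      obtain ⟨I, hI⟩ : ∃ I, I = ∫ y in Set.Ioi (0:ℝ), R δ y ∂(σ i) := ⟨_, rfl⟩
      have hre : (Real.exp (-θ*δ) + ((1 / p i) * Real.sinh (θ * δ) * (S + a i) + I) - 1)
          = (Real.exp (-θ*δ) - 1) + ((1 / p i) * (S + a i)) * Real.sinh (θ*δ) + I := by
        ring
      rw [hfδ, hf0, ← hI, hre, add_div, add_div, mul_div_assoc]
    have hlim := (hslope1.add (hslope2.const_mul ((1 / p i) * (S + a i)))).add hRlim
    have hval : (θ / p i) * (S + a i) - θ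
        = -θ + ((1 / p i) * (S + a i)) * θ + 0 := by
      field_simp
      ring
    rw [hS, hval]
    exact hlim.congr' (hEq.mono fun δ h => h.symm)
  · -- the sum identity
    have hterm : ∀ i : Fin n, p i * ((θ / p i) * ((σ i (Set.Ioi 0)).toReal + a i) - θ)
        = θ * ((σ i (Set.Ioi 0)).toReal + a i) - θ * p i := by
      intro i
      have := (hp i).ne'
      field_simp
    rw [Finset.sum_congr rfl (fun i _ => hterm i), Finset.sum_sub_distrib,
      ← Finset.mul_sum, ← Finset.mul_sum, hpsum, hSsum]
    ring
  · nlinarith [hθ0.le, hs₀]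
end

section
/- Let f be the function represented by a representing datum (σ_1,…,σ_n, a_1,…,a_n, s₀). Then for every x > 0 and every leg i the right derivative f⁺(x,i) exists and the representing measure of the tail is recovered from f by σ_i((x,∞)) + a_i = (p_i/θ)·e^{−θx}·( f⁺(x,i) + θ·f(x,i) ). -/
open Filter Topology MeasureTheory

/-- auxiliary function `e^{θy} sinh(θy)`. -/
noncomputable def hAux (θ y : ℝ) : ℝ := Real.exp (θ * y) * Real.sinh (θ * y)

/-- the smooth comparison function. -/
noncomputable def Lfun (θ x c T G : ℝ) (δ : ℝ) : ℝ :=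
  Real.exp (-θ * (x + δ)) + c * (Real.sinh (θ * (x + δ)) * T + Real.exp (-θ * (x + δ)) * G)

theorem Lfun_hasDerivAt (θ x : ℝ) (c T G : ℝ) :
    HasDerivAt (Lfun θ x c T G)
      (-θ * Real.exp (-θ*x) + c * (θ * Real.cosh (θ*x) * T - θ * Real.exp (-θ*x) * G)) 0 := by
  have hlin : HasDerivAt (fun δ : ℝ => θ*(x+δ)) θ 0 := by
    simpa using ((hasDerivAt_id (0:ℝ)).const_add x).const_mul θ
  have hlin2 : HasDerivAt (fun δ : ℝ => -θ*(x+δ)) (-θ) 0 := by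
    simpa using ((hasDerivAt_id (0:ℝ)).const_add x).const_mul (-θ)
  have hE := hlin2.exp
  have hS := hlin.sinh
  have raw := hE.add (((hS.mul_const T).add (hE.mul_const G)).const_mul c)
  simp only [add_zero] at raw
  have hL : Lfun θ x c T G = fun δ =>
      Real.exp (-θ*(x+δ)) + c * (Real.sinh (θ*(x+δ)) * T + Real.exp (-θ*(x+δ)) * G) := rfl
  rw [hL]
  refine raw.congr_deriv ?_
  ring

theorem hAux_lip (θ x : ℝ) (hθ0 : 0 < θ) :
    ∀ y ∈ Set.Icc x (x+1), ∀ z ∈ Set.Icc x (x+1),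
      ‖hAux θ y - hAux θ z‖ ≤ (θ * Real.exp (2*θ*(x+1))) * ‖y - z‖ := by
  intro y hy z hz
  have hder : ∀ w ∈ Set.Icc x (x+1),
      HasDerivWithinAt (hAux θ) (θ * Real.exp (2*θ*w)) (Set.Icc x (x+1)) w := by
    intro w _
    have h1 : HasDerivAt (fun u : ℝ => θ*u) θ w := by simpa using (hasDerivAt_id w).const_mul θ
    have raw := (h1.exp).mul (h1.sinh)
    have e1 : Real.sinh (θ*w) + Real.cosh (θ*w) = Real.exp (θ*w) := by
      rw [add_comm]; exact Real.cosh_add_sinh _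
    have e2 : Real.exp (θ*w) * Real.exp (θ*w) = Real.exp (2*θ*w) := by
      rw [← Real.exp_add]; ring_nf
    have heq : Real.exp (θ*w) * θ * Real.sinh (θ*w) + Real.exp (θ*w) * (Real.cosh (θ*w) * θ)
        = θ * Real.exp (2*θ*w) := by
      linear_combination (θ*Real.exp (θ*w))*e1 + θ*e2
    have : HasDerivAt (hAux θ) (θ * Real.exp (2*θ*w)) w := by
      unfold hAux; rw [← heq]; exact raw
    exact this.hasDerivWithinAt
  have hbound : ∀ w ∈ Set.Icc x (x+1), ‖θ * Real.exp (2*θ*w)‖ ≤ θ * Real.exp (2*θ*(x+1)) := by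
    intro w hw
    rw [Real.norm_eq_abs, abs_of_pos (by positivity)]
    have : Real.exp (2*θ*w) ≤ Real.exp (2*θ*(x+1)) := Real.exp_le_exp.2 (by nlinarith [hw.2])
    nlinarith
  exact (convex_Icc x (x+1)).norm_image_sub_le_of_norm_hasDerivWithin_le hder hbound hz hy

theorem small_Ioo_tendsto (μ : Measure ℝ) [IsFiniteMeasure μ] (x : ℝ) :
    Tendsto (fun δ => (μ (Set.Ioo x (x+δ))).toReal) (𝓝[>] (0:ℝ)) (𝓝 0) := by
  have h1 : Tendsto (fun δ => μ (Set.Ioo x (x+δ))) (𝓝[>] (0:ℝ)) (𝓝 0) := by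
    have h := tendsto_measure_biInter_gt (μ := μ) (s := fun δ => Set.Ioo x (x+δ)) (a := 0)
      (fun r _ => measurableSet_Ioo.nullMeasurableSet)
      (fun u v hu huv => Set.Ioo_subset_Ioo le_rfl (by linarith))
      ⟨1, one_pos, measure_ne_top _ _⟩
    have hempty : ⋂ δ > (0:ℝ), Set.Ioo x (x+δ) = ∅ := by
      ext y
      simp only [Set.mem_iInter, Set.mem_empty_iff_false, iff_false, not_forall]
      by_cases hxy : x < y
      · refine ⟨y - x, by linarith, fun hmem => ?_⟩
        have := hmem.2
        linarith
      · exact ⟨1, one_pos, fun hmem => hxy hmem.1⟩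
    rw [hempty, measure_empty] at h
    exact h
  have h2 : Tendsto ENNReal.toReal (𝓝 0) (𝓝 (ENNReal.toReal 0)) :=
    ENNReal.tendsto_toReal (by simp)
  simpa [Function.comp_def] using h2.comp h1

theorem key_lemma (n : ℕ) (p : Fin n → ℝ)
    (θ : ℝ)
    (σ : Fin n → Measure ℝ) [∀ k, IsFiniteMeasure (σ k)]
    (a : Fin n → ℝ) (s₀ : ℝ)
    (hnorm : s₀ + ∑ k, ((σ k (Set.Ioi 0)).toReal + a k) = 1)
    (f : ℝ → Fin n → ℝ)
    (hf : ∀ x i, f x i = s₀ * Real.exp (-θ * x) +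
      ∑ k, ((∫ y in Set.Ioi (0:ℝ), martinKernel0 n p θ x i y k ∂(σ k)) +
        a k * martinKernel0Inf n p θ x i k)) (i : Fin n) :
    ∀ z, 0 < z → f z i =
      Real.exp (-θ*z) + (1/p i) * (Real.sinh (θ*z) * ((σ i (Set.Ici z)).toReal + a i)
        + Real.exp (-θ*z) * ∫ y in Set.Ioo 0 z, hAux θ y ∂(σ i)) := by
  intro z hz
  have hdis : Disjoint (Set.Ioo 0 z) (Set.Ici z) :=
    Set.disjoint_left.2 fun y hy hy' => absurd hy' (not_le.2 hy.2)
  have hun : Set.Ioo 0 z ∪ Set.Ici z = Set.Ioi 0 := Set.Ioo_union_Ici_eq_Ioi hz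
  have hcont2 : Continuous fun y : ℝ =>
      Real.exp (-θ*z) * (1 + (1/p i) * Real.exp (θ*y) * Real.sinh (θ*y)) := by fun_prop
  have hint2' : IntegrableOn (fun y : ℝ =>
      Real.exp (-θ*z) * (1 + (1/p i) * Real.exp (θ*y) * Real.sinh (θ*y))) (Set.Ioo 0 z) (σ i) :=
    (hcont2.continuousOn.integrableOn_compact (isCompact_Icc (a := 0) (b := z))).mono_set
      Set.Ioo_subset_Icc_self
  have heq2 : Set.EqOn (fun y : ℝ =>
      Real.exp (-θ*z) * (1 + (1/p i) * Real.exp (θ*y) * Real.sinh (θ*y)))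
      (fun y => martinKernel0 n p θ z i y i) (Set.Ioo 0 z) := by
    intro y hy
    simp [martinKernel0, not_le.2 hy.2]
  have hint2 : IntegrableOn (fun y => martinKernel0 n p θ z i y i) (Set.Ioo 0 z) (σ i) :=
    hint2'.congr_fun heq2 measurableSet_Ioo
  have heq1 : Set.EqOn (fun _ : ℝ => (1/p i) * Real.sinh (θ*z) + Real.exp (-θ*z))
      (fun y => martinKernel0 n p θ z i y i) (Set.Ici z) := by
    intro y hy
    simp [martinKernel0, show z ≤ y from hy]
  have hint1 : IntegrableOn (fun y => martinKernel0 n p θ z i y i) (Set.Ici z) (σ i) :=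
    (integrableOn_const (measure_ne_top _ _)).congr_fun heq1 measurableSet_Ici
  have hIh : IntegrableOn (fun y => hAux θ y) (Set.Ioo 0 z) (σ i) := by
    have : Continuous fun y => hAux θ y := by unfold hAux; fun_prop
    exact (this.continuousOn.integrableOn_compact (isCompact_Icc (a := 0) (b := z))).mono_set
      Set.Ioo_subset_Icc_self
  have hIdiag : (∫ y in Set.Ioi (0:ℝ), martinKernel0 n p θ z i y i ∂(σ i))
      = (Real.exp (-θ*z) * (σ i (Set.Ioo 0 z)).toReal
          + Real.exp (-θ*z) * ((1/p i) * ∫ y in Set.Ioo 0 z, hAux θ y ∂(σ i)))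
        + (σ i (Set.Ici z)).toReal * ((1/p i) * Real.sinh (θ*z) + Real.exp (-θ*z)) := by
    rw [← hun, setIntegral_union hdis measurableSet_Ici hint2 hint1]
    congr 1
    · rw [← setIntegral_congr_fun measurableSet_Ioo heq2]
      have : (fun y : ℝ => Real.exp (-θ*z) * (1 + (1/p i) * Real.exp (θ*y) * Real.sinh (θ*y)))
          = fun y => Real.exp (-θ*z) * (1 + (1/p i) * hAux θ y) := by
        funext y; rw [hAux]; ring
      rw [this, integral_const_mul]
      have hadd : (∫ y in Set.Ioo 0 z, (1 + (1/p i) * hAux θ y) ∂(σ i))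
          = (∫ _ in Set.Ioo 0 z, (1:ℝ) ∂(σ i)) + ∫ y in Set.Ioo 0 z, (1/p i) * hAux θ y ∂(σ i) :=
        integral_add (integrableOn_const (measure_ne_top _ _)) (hIh.const_mul _)
      rw [hadd, setIntegral_const, integral_const_mul, smul_eq_mul, measureReal_def, mul_one, mul_add]
    · rw [← setIntegral_congr_fun measurableSet_Ici heq1, setIntegral_const, smul_eq_mul, measureReal_def]
  have hoff : ∀ k ∈ Finset.univ \ {i},
      ((∫ y in Set.Ioi (0:ℝ), martinKernel0 n p θ z i y k ∂(σ k))
        + a k * martinKernel0Inf n p θ z i k)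
      = ((σ k (Set.Ioi 0)).toReal + a k) * Real.exp (-θ*z) := by
    intro k hk
    have hik : ¬ (i = k) := by
      simp only [Finset.mem_sdiff, Finset.mem_singleton] at hk
      exact fun h => hk.2 h.symm
    have h1 : (fun y : ℝ => martinKernel0 n p θ z i y k) = fun _ => Real.exp (-θ*z) := by
      funext y; simp [martinKernel0, hik]
    rw [h1, setIntegral_const, smul_eq_mul, measureReal_def, martinKernel0Inf, if_neg hik]
    ring
  rw [hf]
  rw [Finset.sum_eq_sum_sdiff_singleton_add (Finset.mem_univ i), Finset.sum_congr rfl hoff,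
    ← Finset.sum_mul, hIdiag]
  have hmass : (σ i (Set.Ioi 0)).toReal
      = (σ i (Set.Ioo 0 z)).toReal + (σ i (Set.Ici z)).toReal := by
    rw [← hun, measure_union hdis measurableSet_Ici,
      ENNReal.toReal_add (measure_ne_top _ _) (measure_ne_top _ _)]
  have hnorm' : s₀ + ((∑ k ∈ Finset.univ \ {i}, ((σ k (Set.Ioi 0)).toReal + a k))
      + ((σ i (Set.Ioo 0 z)).toReal + (σ i (Set.Ici z)).toReal + a i)) = 1 := by
    rw [← hnorm, Finset.sum_eq_sum_sdiff_singleton_add (Finset.mem_univ i)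
      (f := fun k => ((σ k (Set.Ioi 0)).toReal + a k)), ← hmass]
  rw [martinKernel0Inf, if_pos rfl]
  linear_combination (Real.exp (-θ*z)) * hnorm'

/-- for a function `f` represented by a representing datum
`(σ_1,…,σ_n, a_1,…,a_n, s₀)`, for every `x > 0` and every leg `i` the right derivative
`f⁺(x,i)` exists and `σ_i((x,∞)) + a_i = (p_i/θ)·e^{−θx}·(f⁺(x,i) + θ·f(x,i))`. -/
theorem stmt_9 (n : ℕ) (hn : 1 ≤ n) (p : Fin n → ℝ)
    (hp : ∀ i, 0 < p i) (hpsum : ∑ i, p i = 1)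
    (r : ℝ) (hr : 0 < r) (θ : ℝ) (hθ : θ = Real.sqrt (2 * r))
    (σ : Fin n → Measure ℝ) [∀ k, IsFiniteMeasure (σ k)]
    (hσsupp : ∀ k, σ k (Set.Iic 0) = 0)
    (a : Fin n → ℝ) (ha : ∀ k, 0 ≤ a k) (s₀ : ℝ) (hs₀ : 0 ≤ s₀)
    (hnorm : s₀ + ∑ k, ((σ k (Set.Ioi 0)).toReal + a k) = 1)
    (f : ℝ → Fin n → ℝ)
    (hf : ∀ x i, f x i = s₀ * Real.exp (-θ * x) +
      ∑ k, ((∫ y in Set.Ioi (0:ℝ), martinKernel0 n p θ x i y k ∂(σ k)) +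
        a k * martinKernel0Inf n p θ x i k)) :
    ∀ x > (0:ℝ), ∀ i, ∃ d : ℝ,
      Tendsto (fun δ => (f (x + δ) i - f x i) / δ) (𝓝[>] 0) (𝓝 d) ∧
      (σ i (Set.Ioi x)).toReal + a i = (p i / θ) * Real.exp (-θ * x) * (d + θ * f x i) := by
  intro x hx i
  have hθ0 : 0 < θ := by
    rw [hθ]; exact Real.sqrt_pos.2 (by linarith)
  have hpi : (0:ℝ) < p i := hp i
  have key := key_lemma n p θ σ a s₀ hnorm f hf i
  have hIhIcc : ∀ A B : ℝ, IntegrableOn (fun y => hAux θ y) (Set.Icc A B) (σ i) := by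
    intro A B
    have : Continuous fun y => hAux θ y := by unfold hAux; fun_prop
    exact this.continuousOn.integrableOn_compact isCompact_Icc
  -- abbreviations (written out each time)
  -- T' := (σ i (Set.Ioi x)).toReal + a i ; G' := ∫ y in Set.Ioc 0 x, hAux θ y ∂(σ i)
  have hatom : (σ i (Set.Ici x)).toReal = (σ i {x}).toReal + (σ i (Set.Ioi x)).toReal := by
    have hu : {x} ∪ Set.Ioi x = Set.Ici x := by
      ext y
      simp [Set.mem_Ici, le_iff_eq_or_lt, eq_comm]
    have hdisj : Disjoint ({x} : Set ℝ) (Set.Ioi x) := by simp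
    rw [← hu, measure_union hdisj measurableSet_Ioi,
      ENNReal.toReal_add (measure_ne_top _ _) (measure_ne_top _ _)]
  have hGpsplit : (∫ y in Set.Ioc 0 x, hAux θ y ∂(σ i))
      = (∫ y in Set.Ioo 0 x, hAux θ y ∂(σ i)) + (σ i {x}).toReal * hAux θ x := by
    rw [← Set.Ioo_union_right hx,
      setIntegral_union (Set.disjoint_singleton_right.2 (fun h => lt_irrefl x h.2))
        (measurableSet_singleton x)
        ((hIhIcc 0 x).mono_set Set.Ioo_subset_Icc_self)
        ((hIhIcc 0 x).mono_set (by simp [Set.singleton_subset_iff, hx.le]))]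
    congr 1
    rw [setIntegral_congr_fun (measurableSet_singleton x) (g := fun _ => hAux θ x)
      (fun y hy => by rw [Set.mem_singleton_iff] at hy; rw [hy]), setIntegral_const,
      smul_eq_mul, measureReal_def]
  have hax : ∀ z : ℝ, Real.exp (-θ*z) * hAux θ z = Real.sinh (θ*z) := by
    intro z
    unfold hAux
    rw [← mul_assoc, ← Real.exp_add, neg_mul, neg_add_cancel, Real.exp_zero, one_mul]
  have hfx : f x i = Lfun θ x (1/p i) ((σ i (Set.Ioi x)).toReal + a i)
      (∫ y in Set.Ioc 0 x, hAux θ y ∂(σ i)) 0 := by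
    rw [key x hx]
    simp only [Lfun, add_zero]
    rw [hatom, hGpsplit]
    linear_combination (-(1/p i) * (σ i {x}).toReal) * hax x
  have hrem : ∀ δ : ℝ, 0 < δ → f (x+δ) i - Lfun θ x (1/p i) ((σ i (Set.Ioi x)).toReal + a i)
      (∫ y in Set.Ioc 0 x, hAux θ y ∂(σ i)) δ
      = (1/p i) * Real.exp (-θ*(x+δ)) *
        ((∫ y in Set.Ioo x (x+δ), hAux θ y ∂(σ i))
          - hAux θ (x+δ) * (σ i (Set.Ioo x (x+δ))).toReal) := by
    intro δ hδ
    have hxδ : (0:ℝ) < x + δ := by linarith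
    have hxx : x < x + δ := by linarith
    have hdisj2 : Disjoint (Set.Ioo x (x+δ)) (Set.Ici (x+δ)) :=
      Set.disjoint_left.2 fun y hy hy' => absurd hy' (not_le.2 hy.2)
    have hμsplit : (σ i (Set.Ioi x)).toReal
        = (σ i (Set.Ioo x (x+δ))).toReal + (σ i (Set.Ici (x+δ))).toReal := by
      rw [← Set.Ioo_union_Ici_eq_Ioi hxx, measure_union hdisj2 measurableSet_Ici,
        ENNReal.toReal_add (measure_ne_top _ _) (measure_ne_top _ _)]
    have hGsplit : (∫ y in Set.Ioo 0 (x+δ), hAux θ y ∂(σ i))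
        = (∫ y in Set.Ioc 0 x, hAux θ y ∂(σ i)) + ∫ y in Set.Ioo x (x+δ), hAux θ y ∂(σ i) := by
      rw [← Set.Ioc_union_Ioo_eq_Ioo hx.le hxx,
        setIntegral_union (Set.disjoint_left.2 fun (y:ℝ) (hy : y ∈ Set.Ioc 0 x)
            (hy' : y ∈ Set.Ioo x (x+δ)) => absurd hy.2 (not_le.2 hy'.1))
          measurableSet_Ioo
          ((hIhIcc 0 x).mono_set Set.Ioc_subset_Icc_self)
          ((hIhIcc x (x+δ)).mono_set Set.Ioo_subset_Icc_self)]
    rw [key (x+δ) hxδ]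
    simp only [Lfun]
    rw [hGsplit, hμsplit]
    linear_combination ((1/p i) * (σ i (Set.Ioo x (x+δ))).toReal) * hax (x+δ)
  have hdL := Lfun_hasDerivAt θ x (1/p i) ((σ i (Set.Ioi x)).toReal + a i)
      (∫ y in Set.Ioc 0 x, hAux θ y ∂(σ i))
  set d : ℝ := -θ * Real.exp (-θ*x) + (1/p i) *
      (θ * Real.cosh (θ*x) * ((σ i (Set.Ioi x)).toReal + a i)
        - θ * Real.exp (-θ*x) * (∫ y in Set.Ioc 0 x, hAux θ y ∂(σ i))) with hd
  refine ⟨d, ?_, ?_⟩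
  · -- the slope of L
    have hslope : Tendsto (fun δ => (Lfun θ x (1/p i) ((σ i (Set.Ioi x)).toReal + a i)
        (∫ y in Set.Ioc 0 x, hAux θ y ∂(σ i)) δ
        - Lfun θ x (1/p i) ((σ i (Set.Ioi x)).toReal + a i)
        (∫ y in Set.Ioc 0 x, hAux θ y ∂(σ i)) 0)/δ) (𝓝[>] (0:ℝ)) (𝓝 d) := by
      have h1 := hasDerivAt_iff_tendsto_slope.1 hdL
      have h2 := h1.mono_left
        (nhdsWithin_mono 0 (fun y hy => Set.mem_compl_singleton_iff.2 (ne_of_gt hy)))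
      refine h2.congr fun δ => ?_
      rw [slope_def_field, sub_zero]
    -- the remainder goes to 0
    have hmvt := hAux_lip θ x hθ0
    have hμ := small_Ioo_tendsto (σ i) x
    have hR0 : Tendsto (fun δ => (f (x+δ) i - Lfun θ x (1/p i)
        ((σ i (Set.Ioi x)).toReal + a i) (∫ y in Set.Ioc 0 x, hAux θ y ∂(σ i)) δ)/δ)
        (𝓝[>] (0:ℝ)) (𝓝 0) := by
      refine squeeze_zero_norm' ?_
        (by simpa using hμ.const_mul ((1/p i) * (θ * Real.exp (2*θ*(x+1)))))
      filter_upwards [Ioo_mem_nhdsGT_of_mem (Set.mem_Ico.2 ⟨le_refl (0:ℝ), one_pos⟩)] with δ hδ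
      have hδ1 : 0 < δ := hδ.1
      have hδ2 : δ < 1 := hδ.2
      rw [hrem δ hδ.1]
      have hm0 : 0 ≤ (σ i (Set.Ioo x (x+δ))).toReal := ENNReal.toReal_nonneg
      have hIsub : (∫ y in Set.Ioo x (x+δ), hAux θ y ∂(σ i))
          - hAux θ (x+δ) * (σ i (Set.Ioo x (x+δ))).toReal
          = ∫ y in Set.Ioo x (x+δ), (hAux θ y - hAux θ (x+δ)) ∂(σ i) := by
        rw [integral_sub ((hIhIcc x (x+δ)).mono_set Set.Ioo_subset_Icc_self)
          (integrableOn_const (measure_ne_top _ _)), setIntegral_const,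
          smul_eq_mul, measureReal_def, mul_comm]
      have hZ : |(∫ y in Set.Ioo x (x+δ), hAux θ y ∂(σ i))
          - hAux θ (x+δ) * (σ i (Set.Ioo x (x+δ))).toReal|
          ≤ (θ * Real.exp (2*θ*(x+1)) * δ) * (σ i (Set.Ioo x (x+δ))).toReal := by
        rw [← Real.norm_eq_abs, hIsub]
        refine norm_setIntegral_le_of_norm_le_const (measure_lt_top _ _) (fun y hy => ?_)
        have h1 := hmvt y ⟨hy.1.le, by linarith [hy.2, hδ.2]⟩ (x+δ)
          ⟨by linarith, by linarith [hδ.2]⟩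
        have h2 : ‖y - (x+δ)‖ ≤ δ := by
          rw [Real.norm_eq_abs, abs_of_nonpos (by linarith [hy.2])]
          linarith [hy.1]
        calc ‖hAux θ y - hAux θ (x+δ)‖
            ≤ (θ * Real.exp (2*θ*(x+1))) * ‖y - (x+δ)‖ := h1
          _ ≤ θ * Real.exp (2*θ*(x+1)) * δ := by
              have : (0:ℝ) ≤ θ * Real.exp (2*θ*(x+1)) := by positivity
              nlinarith
      have hE1 : Real.exp (-θ*(x+δ)) ≤ 1 := by
        rw [Real.exp_le_one_iff]
        nlinarith [hδ.1]
      rw [Real.norm_eq_abs, abs_div, abs_of_pos hδ.1, div_le_iff₀ hδ.1, abs_mul, abs_mul,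
        abs_of_pos (by positivity : (0:ℝ) < 1/p i), abs_of_pos (Real.exp_pos _)]
      have habs : 0 ≤ |(∫ y in Set.Ioo x (x+δ), hAux θ y ∂(σ i))
          - hAux θ (x+δ) * (σ i (Set.Ioo x (x+δ))).toReal| := abs_nonneg _
      have hc0 : (0:ℝ) < 1/p i := by positivity
      have h2 := mul_le_mul_of_nonneg_left ((mul_le_of_le_one_left habs hE1).trans hZ) hc0.le
      ring_nf at h2 ⊢
      linarith [h2]
    have := hslope.add hR0
    have hfinal : Tendsto (fun δ => (f (x + δ) i - f x i) / δ) (𝓝[>] (0:ℝ)) (𝓝 (d + 0)) := by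
      refine this.congr fun δ => ?_
      rw [hfx]
      ring
    simpa using hfinal
  · -- the identity
    rw [hfx]
    simp only [Lfun, add_zero, hd, neg_mul]
    have hcs : Real.cosh (θ*x) + Real.sinh (θ*x) = Real.exp (θ*x) := Real.cosh_add_sinh _
    have he : Real.exp (-(θ*x)) * Real.exp (θ*x) = 1 := by
      rw [← Real.exp_add, neg_add_cancel, Real.exp_zero]
    have h1 : -(θ * Real.exp (-(θ*x))) + (1/p i) *
        (θ * Real.cosh (θ*x) * ((σ i (Set.Ioi x)).toReal + a i)
          - θ * Real.exp (-(θ*x)) * (∫ y in Set.Ioc 0 x, hAux θ y ∂(σ i)))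
        + θ * (Real.exp (-(θ*x)) + (1/p i) *
          (Real.sinh (θ*x) * ((σ i (Set.Ioi x)).toReal + a i)
            + Real.exp (-(θ*x)) * (∫ y in Set.Ioc 0 x, hAux θ y ∂(σ i))))
        = (θ/p i) * ((σ i (Set.Ioi x)).toReal + a i) * Real.exp (θ*x) := by
      field_simp
      linear_combination (((σ i (Set.Ioi x)).toReal + a i)) * hcs
    rw [h1]
    field_simp
    linear_combination (-(((σ i (Set.Ioi x)).toReal + a i))) * he
end

section
/- Let f be the function represented by a representing datum (σ_1,…,σ_n, a_1,…,a_n, s₀). Then for every x > 0 and every leg i both one-sided derivatives f⁺(x,i) and f⁻(x,i) exist and f⁺(x,i) − f⁻(x,i) = −(θ/p_i)·e^{θx}·σ_i({x}) ≤ 0; in particular f(·,i) is differentiable at x whenever σ_i has no atom at x. -/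
open Filter Topology MeasureTheory


private lemma exp_abs_sub_le {a b M : ℝ} (ha : a ≤ M) (hb : b ≤ M) :
    |Real.exp b - Real.exp a| ≤ Real.exp M * |b - a| := by
  wlog h : a ≤ b generalizing a b
  · have := this hb ha (le_of_not_ge h)
    rwa [abs_sub_comm, abs_sub_comm a b] at this
  rw [abs_of_nonneg (sub_nonneg.mpr (Real.exp_le_exp.mpr h)), abs_of_nonneg (sub_nonneg.mpr h)]
  have h1 : Real.exp a = Real.exp b * Real.exp (a - b) := by rw [← Real.exp_add]; ring_nf
  have h2 : 1 + (a - b) ≤ Real.exp (a - b) := by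
    have := Real.add_one_le_exp (a - b); linarith
  have h3 : Real.exp b ≤ Real.exp M := Real.exp_le_exp.mpr hb
  nlinarith [Real.exp_pos b, Real.exp_pos (a - b)]

private lemma tendsto_meas_zero (ν : MeasureTheory.Measure ℝ) [IsFiniteMeasure ν] (s : ℝ → Set ℝ)
    (hmono : ∀ ⦃d₁ d₂ : ℝ⦄, d₁ ≤ d₂ → s d₁ ⊆ s d₂)
    (hmeas : ∀ d, MeasurableSet (s d))
    (hempty : ⋂ m : ℕ, s (1/(m+1)) = ∅) :
    Tendsto (fun δ => (ν (s δ)).toReal) (𝓝[>] (0:ℝ)) (𝓝 0) := by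
  have hanti : Antitone (fun m : ℕ => s (1/(m+1))) := by
    intro m m' hmm'
    apply hmono
    have h1 : ((m:ℝ)+1) ≤ ((m':ℝ)+1) := by exact_mod_cast Nat.succ_le_succ hmm'
    exact one_div_le_one_div_of_le (by positivity) h1
  have hseq : Tendsto (fun m : ℕ => ν (s (1/(m+1)))) atTop (𝓝 0) := by
    have := tendsto_measure_iInter_atTop (μ := ν) (s := fun m : ℕ => s (1/(m+1)))
      (fun m => (hmeas _).nullMeasurableSet) hanti ⟨0, measure_ne_top _ _⟩
    rw [hempty] at this
    simpa [Function.comp_def] using this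
  have hseq' : Tendsto (fun m : ℕ => (ν (s (1/(m+1)))).toReal) atTop (𝓝 0) := by
    have := (ENNReal.tendsto_toReal (a := 0) (by simp)).comp hseq
    simpa [Function.comp_def] using this
  rw [tendsto_order]
  constructor
  · intro b hb
    filter_upwards with δ
    exact lt_of_lt_of_le hb ENNReal.toReal_nonneg
  · intro b hb
    obtain ⟨m, hm⟩ := (hseq'.eventually (gt_mem_nhds hb)).exists
    filter_upwards [Ioo_mem_nhdsGT (show (0:ℝ) < 1/(m+1) by positivity)] with δ hδ
    exact lt_of_le_of_lt
      (ENNReal.toReal_mono (measure_ne_top _ _) (measure_mono (hmono hδ.2.le))) hm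

private lemma tendsto_slope_right {F : ℝ → ℝ} {x d : ℝ} (h : HasDerivAt F d x) :
    Tendsto (fun δ => (F (x+δ) - F x)/δ) (𝓝[>] (0:ℝ)) (𝓝 d) := by
  have hs := hasDerivAt_iff_tendsto_slope.mp h
  have hmap : Tendsto (fun δ : ℝ => x + δ) (𝓝[>] (0:ℝ)) (𝓝[≠] x) := by
    apply Tendsto.mono_right _ (nhdsWithin_mono x (fun t ht => ne_of_gt ht : Set.Ioi x ⊆ {x}ᶜ))
    apply tendsto_nhdsWithin_of_tendsto_nhds_of_eventually_within
    · have : Tendsto (fun δ : ℝ => x + δ) (𝓝 0) (𝓝 (x + 0)) :=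
        (continuous_const.add continuous_id).tendsto 0
      simpa using this.mono_left nhdsWithin_le_nhds
    · exact eventually_mem_nhdsWithin.mono fun δ hδ => by simpa using hδ
  have := hs.comp hmap
  refine this.congr fun δ => ?_
  simp [Function.comp, slope_def_field]

private lemma tendsto_slope_left {F : ℝ → ℝ} {x d : ℝ} (h : HasDerivAt F d x) :
    Tendsto (fun δ => (F x - F (x-δ))/δ) (𝓝[>] (0:ℝ)) (𝓝 d) := by
  have hs := hasDerivAt_iff_tendsto_slope.mp h
  have hmap : Tendsto (fun δ : ℝ => x - δ) (𝓝[>] (0:ℝ)) (𝓝[≠] x) := by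
    apply Tendsto.mono_right _ (nhdsWithin_mono x (fun t ht => ne_of_lt ht : Set.Iio x ⊆ {x}ᶜ))
    apply tendsto_nhdsWithin_of_tendsto_nhds_of_eventually_within
    · have : Tendsto (fun δ : ℝ => x - δ) (𝓝 0) (𝓝 (x - 0)) :=
        (continuous_const.sub continuous_id).tendsto 0
      simpa using this.mono_left nhdsWithin_le_nhds
    · exact eventually_mem_nhdsWithin.mono fun δ hδ => by
        simp only [Set.mem_Iio]
        have : (0:ℝ) < δ := hδ
        linarith
  have := hs.comp hmap
  refine this.congr fun δ => ?_
  simp only [Function.comp, slope_def_field]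
  rw [show x - δ - x = -δ from by ring, div_neg, ← neg_div, neg_sub]

private lemma hasDerivAt_of_sided {F : ℝ → ℝ} {x d : ℝ}
    (h₁ : Tendsto (fun δ => (F (x+δ) - F x)/δ) (𝓝[>] (0:ℝ)) (𝓝 d))
    (h₂ : Tendsto (fun δ => (F x - F (x-δ))/δ) (𝓝[>] (0:ℝ)) (𝓝 d)) :
    HasDerivAt F d x := by
  rw [hasDerivAt_iff_tendsto_slope, ← nhdsLT_sup_nhdsGT x, tendsto_sup]
  constructor
  · have hmap : Tendsto (fun t : ℝ => x - t) (𝓝[<] x) (𝓝[>] (0:ℝ)) := by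
      apply tendsto_nhdsWithin_of_tendsto_nhds_of_eventually_within
      · have : Tendsto (fun t : ℝ => x - t) (𝓝 x) (𝓝 (x - x)) :=
          (continuous_const.sub continuous_id).tendsto x
        simpa using this.mono_left nhdsWithin_le_nhds
      · exact eventually_mem_nhdsWithin.mono fun t ht => by
          simp only [Set.mem_Ioi]
          have : t < x := ht
          linarith
    have := h₂.comp hmap
    refine this.congr fun t => ?_
    simp only [Function.comp]
    rw [slope_def_field, show x - (x - t) = t from by ring,
      show F x - F t = -(F t - F x) from by ring, show x - t = -(t - x) from by ring,
      neg_div_neg_eq]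
  · have hmap : Tendsto (fun t : ℝ => t - x) (𝓝[>] x) (𝓝[>] (0:ℝ)) := by
      apply tendsto_nhdsWithin_of_tendsto_nhds_of_eventually_within
      · have : Tendsto (fun t : ℝ => t - x) (𝓝 x) (𝓝 (x - x)) :=
          (continuous_id.sub continuous_const).tendsto x
        simpa using this.mono_left nhdsWithin_le_nhds
      · exact eventually_mem_nhdsWithin.mono fun t ht => by
          simp only [Set.mem_Ioi]
          have : x < t := ht
          linarith
    have := h₁.comp hmap
    refine this.congr fun t => ?_
    simp only [Function.comp]
    rw [slope_def_field, show x + (t - x) = t from by ring]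

private lemma one_sided_aux (ν : MeasureTheory.Measure ℝ) [IsFiniteMeasure ν]
    (A B c : ℝ → ℝ) (A' B' : ℝ) (x : ℝ) (hx : 0 < x)
    (hA : HasDerivAt A A' x) (hB : HasDerivAt B B' x)
    (hc : Continuous c) (hAc : A x = B x * c x)
    (L : ℝ) (hL0 : 0 ≤ L)
    (hLip : ∀ y ∈ Set.Icc (x/2) (x+1), |c y - c x| ≤ L * |y - x|)
    (ca ci : ℝ) (F : ℝ → ℝ)
    (hrep : ∀ t, 0 < t → F t = A t * (ca + (ν (Set.Ici t)).toReal) +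
      B t * (ci + ∫ y in Set.Ioo 0 t, c y ∂ν)) :
    Tendsto (fun δ => (F (x+δ) - F x)/δ) (𝓝[>] (0:ℝ))
      (𝓝 (A' * (ca + (ν (Set.Ioi x)).toReal) +
        B' * (ci + ((∫ y in Set.Ioo 0 x, c y ∂ν) + c x * (ν {x}).toReal)))) ∧
    Tendsto (fun δ => (F x - F (x-δ))/δ) (𝓝[>] (0:ℝ))
      (𝓝 (A' * (ca + (ν (Set.Ici x)).toReal) +
        B' * (ci + ∫ y in Set.Ioo 0 x, c y ∂ν))) := by
  -- integrability of c on compact intervals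
  have hint : ∀ u v : ℝ, IntegrableOn c (Set.Icc u v) ν :=
    fun u v => ContinuousOn.integrableOn_compact isCompact_Icc hc.continuousOn
  -- measure limits
  have kR : Tendsto (fun δ => (ν (Set.Ioo x (x+δ))).toReal) (𝓝[>] (0:ℝ)) (𝓝 0) := by
    apply tendsto_meas_zero ν (fun δ => Set.Ioo x (x+δ))
      (fun d₁ d₂ h => Set.Ioo_subset_Ioo_right (by linarith))
      (fun d => measurableSet_Ioo)
    ext y
    simp only [Set.mem_iInter, Set.mem_Ioo, Set.mem_empty_iff_false, iff_false, not_forall]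
    by_contra hcon
    push_neg at hcon
    obtain ⟨m, hm⟩ := exists_nat_one_div_lt (sub_pos.mpr (hcon 0).1)
    exact absurd ((hcon m).2) (by push_cast at hm ⊢; linarith)
  have kL : Tendsto (fun δ => (ν (Set.Ico (x-δ) x)).toReal) (𝓝[>] (0:ℝ)) (𝓝 0) := by
    apply tendsto_meas_zero ν (fun δ => Set.Ico (x-δ) x)
      (fun d₁ d₂ h => Set.Ico_subset_Ico_left (by linarith))
      (fun d => measurableSet_Ico)
    ext y
    simp only [Set.mem_iInter, Set.mem_Ico, Set.mem_empty_iff_false, iff_false, not_forall]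
    by_contra hcon
    push_neg at hcon
    obtain ⟨m, hm⟩ := exists_nat_one_div_lt (sub_pos.mpr (hcon 0).2)
    exact absurd ((hcon m).1) (by push_cast at hm ⊢; intro h; linarith)
  -- bound on c near x
  obtain ⟨Cc, hCc⟩ : ∃ C, ∀ y ∈ Set.Icc (x/2) (x+1), ‖c y‖ ≤ C :=
    IsCompact.exists_bound_of_continuousOn isCompact_Icc hc.continuousOn
  ------------------------------------------------------------------
  -- RIGHT side
  ------------------------------------------------------------------
  have hmR : ∀ δ : ℝ, 0 < δ →
      (ν (Set.Ici (x+δ))).toReal = (ν (Set.Ioi x)).toReal - (ν (Set.Ioo x (x+δ))).toReal := by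
    intro δ hδ
    have h1 : Set.Ioo x (x+δ) ∪ Set.Ici (x+δ) = Set.Ioi x :=
      Set.Ioo_union_Ici_eq_Ioi (by linarith)
    have hdisj : Disjoint (Set.Ioo x (x+δ)) (Set.Ici (x+δ)) :=
      (Set.Iio_disjoint_Ici le_rfl).mono_left Set.Ioo_subset_Iio_self
    have h2 : ν (Set.Ioi x) = ν (Set.Ioo x (x+δ)) + ν (Set.Ici (x+δ)) := by
      rw [← h1, measure_union hdisj measurableSet_Ici]
    rw [h2, ENNReal.toReal_add (measure_ne_top _ _) (measure_ne_top _ _)]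
    ring
  have hhR : ∀ δ : ℝ, 0 < δ →
      (∫ y in Set.Ioo 0 (x+δ), c y ∂ν) = (∫ y in Set.Ioo 0 x, c y ∂ν) +
        (c x * (ν {x}).toReal + ∫ y in Set.Ioo x (x+δ), c y ∂ν) := by
    intro δ hδ
    have e1 : Set.Ioo 0 (x+δ) = Set.Ioo 0 x ∪ Set.Ico x (x+δ) :=
      (Set.Ioo_union_Ico_eq_Ioo hx (by linarith)).symm
    have e2 : Set.Ico x (x+δ) = {x} ∪ Set.Ioo x (x+δ) := by
      rw [← Set.insert_eq, Set.Ioo_insert_left (by linarith)]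
    have d1 : Disjoint (Set.Ioo 0 x) (Set.Ico x (x+δ)) :=
      (Set.Iio_disjoint_Ici le_rfl).mono Set.Ioo_subset_Iio_self Set.Ico_subset_Ici_self
    have d2 : Disjoint ({x} : Set ℝ) (Set.Ioo x (x+δ)) :=
      Set.disjoint_singleton_left.mpr (by simp)
    have i1 : IntegrableOn c (Set.Ioo 0 x) ν := (hint 0 x).mono_set Set.Ioo_subset_Icc_self
    have i2 : IntegrableOn c (Set.Ico x (x+δ)) ν :=
      (hint x (x+δ)).mono_set Set.Ico_subset_Icc_self
    have i3 : IntegrableOn c ({x} : Set ℝ) ν :=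
      (hint x x).mono_set (by simp)
    have i4 : IntegrableOn c (Set.Ioo x (x+δ)) ν :=
      (hint x (x+δ)).mono_set Set.Ioo_subset_Icc_self
    rw [e1, setIntegral_union d1 measurableSet_Ico i1 i2, e2,
      setIntegral_union d2 measurableSet_Ioo i3 i4, integral_singleton]
    simp only [smul_eq_mul, measureReal_def]
    ring
  have hsubR : ∀ δ : ℝ, 0 < δ →
      (∫ y in Set.Ioo x (x+δ), (c y - c x) ∂ν) =
        (∫ y in Set.Ioo x (x+δ), c y ∂ν) - c x * (ν (Set.Ioo x (x+δ))).toReal := by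
    intro δ hδ
    rw [integral_sub ((hint x (x+δ)).mono_set Set.Ioo_subset_Icc_self)
      (integrableOn_const (measure_ne_top _ _))]
    rw [setIntegral_const, smul_eq_mul, mul_comm, measureReal_def]
  have hIci : (ν (Set.Ici x)).toReal = (ν (Set.Ioi x)).toReal + (ν {x}).toReal := by
    have h1 : Set.Ici x = {x} ∪ Set.Ioi x := by
      rw [← Set.insert_eq, Set.Ioi_insert]
    have hdisj : Disjoint ({x} : Set ℝ) (Set.Ioi x) := Set.disjoint_singleton_left.mpr (by simp)
    rw [h1, measure_union hdisj measurableSet_Ioi,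
      ENNReal.toReal_add (measure_ne_top _ _) (measure_ne_top _ _)]
    ring
  have heqR : ∀ δ ∈ Set.Ioi (0:ℝ), (F (x+δ) - F x)/δ =
      ((A (x+δ) - A x)/δ) * (ca + ((ν (Set.Ioi x)).toReal - (ν (Set.Ioo x (x+δ))).toReal)) +
      ((B (x+δ) - B x)/δ) * (ci + ((∫ y in Set.Ioo 0 x, c y ∂ν) +
        (c x * (ν {x}).toReal + ∫ y in Set.Ioo x (x+δ), c y ∂ν))) +
      (B x * ∫ y in Set.Ioo x (x+δ), (c y - c x) ∂ν)/δ := by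
    intro δ hδ
    have hδ' : (0:ℝ) < δ := hδ
    rw [hrep (x+δ) (by linarith), hrep x hx, hmR δ hδ', hhR δ hδ', hsubR δ hδ', hIci, hAc]
    field_simp
    ring
  -- limits (right)
  have limA : Tendsto (fun δ => (A (x+δ) - A x)/δ) (𝓝[>] (0:ℝ)) (𝓝 A') := tendsto_slope_right hA
  have limB : Tendsto (fun δ => (B (x+δ) - B x)/δ) (𝓝[>] (0:ℝ)) (𝓝 B') := tendsto_slope_right hB
  have fac1R : Tendsto (fun δ => ca + ((ν (Set.Ioi x)).toReal - (ν (Set.Ioo x (x+δ))).toReal))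
      (𝓝[>] (0:ℝ)) (𝓝 (ca + (ν (Set.Ioi x)).toReal)) := by
    have h0 : Tendsto (fun δ : ℝ => (ν (Set.Ioi x)).toReal - (ν (Set.Ioo x (x+δ))).toReal)
        (𝓝[>] (0:ℝ)) (𝓝 ((ν (Set.Ioi x)).toReal - 0)) := tendsto_const_nhds.sub kR
    have h1 : Tendsto (fun δ : ℝ => ca + ((ν (Set.Ioi x)).toReal - (ν (Set.Ioo x (x+δ))).toReal))
        (𝓝[>] (0:ℝ)) (𝓝 (ca + ((ν (Set.Ioi x)).toReal - 0))) := tendsto_const_nhds.add h0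
    simpa using h1
  have JR : Tendsto (fun δ => ∫ y in Set.Ioo x (x+δ), c y ∂ν) (𝓝[>] (0:ℝ)) (𝓝 0) := by
    apply squeeze_zero_norm' (a := fun δ => Cc * (ν (Set.Ioo x (x+δ))).toReal)
    · filter_upwards [Ioo_mem_nhdsGT (show (0:ℝ) < 1 from one_pos)] with δ hδ
      refine norm_setIntegral_le_of_norm_le_const (measure_lt_top _ _)
        fun y hy => hCc y ⟨by linarith [hy.1], by linarith [hy.2, hδ.2]⟩
    · simpa using kR.const_mul Cc
  have fac2R : Tendsto (fun δ => ci + ((∫ y in Set.Ioo 0 x, c y ∂ν) +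
      (c x * (ν {x}).toReal + ∫ y in Set.Ioo x (x+δ), c y ∂ν))) (𝓝[>] (0:ℝ))
      (𝓝 (ci + ((∫ y in Set.Ioo 0 x, c y ∂ν) + c x * (ν {x}).toReal))) := by
    have h0 : Tendsto (fun δ : ℝ => c x * (ν {x}).toReal + ∫ y in Set.Ioo x (x+δ), c y ∂ν)
        (𝓝[>] (0:ℝ)) (𝓝 (c x * (ν {x}).toReal + 0)) := tendsto_const_nhds.add JR
    have h1 : Tendsto (fun δ : ℝ => (∫ y in Set.Ioo 0 x, c y ∂ν) +
        (c x * (ν {x}).toReal + ∫ y in Set.Ioo x (x+δ), c y ∂ν)) (𝓝[>] (0:ℝ))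
        (𝓝 ((∫ y in Set.Ioo 0 x, c y ∂ν) + (c x * (ν {x}).toReal + 0))) :=
      tendsto_const_nhds.add h0
    have h2 : Tendsto (fun δ : ℝ => ci + ((∫ y in Set.Ioo 0 x, c y ∂ν) +
        (c x * (ν {x}).toReal + ∫ y in Set.Ioo x (x+δ), c y ∂ν))) (𝓝[>] (0:ℝ))
        (𝓝 (ci + ((∫ y in Set.Ioo 0 x, c y ∂ν) + (c x * (ν {x}).toReal + 0)))) :=
      tendsto_const_nhds.add h1
    simpa using h2
  have T3R : Tendsto (fun δ => (B x * ∫ y in Set.Ioo x (x+δ), (c y - c x) ∂ν)/δ)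
      (𝓝[>] (0:ℝ)) (𝓝 0) := by
    apply squeeze_zero_norm' (a := fun δ => |B x| * L * (ν (Set.Ioo x (x+δ))).toReal)
    · filter_upwards [Ioo_mem_nhdsGT (show (0:ℝ) < 1 from one_pos)] with δ hδ
      have hb : ‖∫ y in Set.Ioo x (x+δ), (c y - c x) ∂ν‖ ≤
          (L*δ) * (ν (Set.Ioo x (x+δ))).toReal := by
        refine norm_setIntegral_le_of_norm_le_const (measure_lt_top _ _)
          fun y hy => ?_
        have h1 := hLip y ⟨by linarith [hy.1], by linarith [hy.2, hδ.2]⟩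
        have h2 : |y - x| ≤ δ := by
          rw [abs_of_nonneg (by linarith [hy.1])]; linarith [hy.2]
        calc ‖c y - c x‖ = |c y - c x| := rfl
          _ ≤ L * |y - x| := h1
          _ ≤ L * δ := mul_le_mul_of_nonneg_left h2 hL0
      calc ‖(B x * ∫ y in Set.Ioo x (x+δ), (c y - c x) ∂ν)/δ‖
          = |B x| * ‖∫ y in Set.Ioo x (x+δ), (c y - c x) ∂ν‖ / δ := by
            rw [norm_div, norm_mul, Real.norm_eq_abs δ, abs_of_pos hδ.1]; rfl
        _ ≤ |B x| * ((L*δ) * (ν (Set.Ioo x (x+δ))).toReal) / δ :=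
            (div_le_div_iff_of_pos_right hδ.1).mpr (mul_le_mul_of_nonneg_left hb (abs_nonneg _))
        _ = |B x| * L * (ν (Set.Ioo x (x+δ))).toReal := by
            field_simp [hδ.1.ne']
    · simpa using kR.const_mul (|B x| * L)
  have hRight : Tendsto (fun δ => (F (x+δ) - F x)/δ) (𝓝[>] (0:ℝ))
      (𝓝 (A' * (ca + (ν (Set.Ioi x)).toReal) +
        B' * (ci + ((∫ y in Set.Ioo 0 x, c y ∂ν) + c x * (ν {x}).toReal)))) := by
    have hG := ((limA.mul fac1R).add (limB.mul fac2R)).add T3R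
    rw [add_zero] at hG
    refine Tendsto.congr' ?_ hG
    exact eventually_nhdsWithin_of_forall fun δ hδ => (heqR δ hδ).symm
  ------------------------------------------------------------------
  -- LEFT side
  ------------------------------------------------------------------
  have hmL : ∀ δ : ℝ, 0 < δ → δ < x →
      (ν (Set.Ici (x-δ))).toReal = (ν (Set.Ici x)).toReal + (ν (Set.Ico (x-δ) x)).toReal := by
    intro δ hδ hδx
    have h1 : Set.Ico (x-δ) x ∪ Set.Ici x = Set.Ici (x-δ) :=
      Set.Ico_union_Ici_eq_Ici (by linarith)
    have hdisj : Disjoint (Set.Ico (x-δ) x) (Set.Ici x) :=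
      (Set.Iio_disjoint_Ici le_rfl).mono_left Set.Ico_subset_Iio_self
    have h2 : ν (Set.Ici (x-δ)) = ν (Set.Ico (x-δ) x) + ν (Set.Ici x) := by
      rw [← h1, measure_union hdisj measurableSet_Ici]
    rw [h2, ENNReal.toReal_add (measure_ne_top _ _) (measure_ne_top _ _)]
    ring
  have hhL : ∀ δ : ℝ, 0 < δ → δ < x →
      (∫ y in Set.Ioo 0 (x-δ), c y ∂ν) =
        (∫ y in Set.Ioo 0 x, c y ∂ν) - ∫ y in Set.Ico (x-δ) x, c y ∂ν := by
    intro δ hδ hδx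
    have e1 : Set.Ioo 0 x = Set.Ioo 0 (x-δ) ∪ Set.Ico (x-δ) x :=
      (Set.Ioo_union_Ico_eq_Ioo (by linarith) (by linarith)).symm
    have d1 : Disjoint (Set.Ioo 0 (x-δ)) (Set.Ico (x-δ) x) :=
      (Set.Iio_disjoint_Ici le_rfl).mono Set.Ioo_subset_Iio_self Set.Ico_subset_Ici_self
    have i1 : IntegrableOn c (Set.Ioo 0 (x-δ)) ν := (hint 0 (x-δ)).mono_set Set.Ioo_subset_Icc_self
    have i2 : IntegrableOn c (Set.Ico (x-δ) x) ν := (hint (x-δ) x).mono_set Set.Ico_subset_Icc_self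
    rw [e1, setIntegral_union d1 measurableSet_Ico i1 i2]
    ring
  have hsubL : ∀ δ : ℝ, 0 < δ → δ < x →
      (∫ y in Set.Ico (x-δ) x, (c y - c x) ∂ν) =
        (∫ y in Set.Ico (x-δ) x, c y ∂ν) - c x * (ν (Set.Ico (x-δ) x)).toReal := by
    intro δ hδ hδx
    rw [integral_sub ((hint (x-δ) x).mono_set Set.Ico_subset_Icc_self)
      (integrableOn_const (measure_ne_top _ _))]
    rw [setIntegral_const, smul_eq_mul, mul_comm, measureReal_def]
  have heqL : ∀ δ ∈ Set.Ioo (0:ℝ) x, (F x - F (x-δ))/δ =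
      ((A x - A (x-δ))/δ) * (ca + ((ν (Set.Ici x)).toReal + (ν (Set.Ico (x-δ) x)).toReal)) +
      ((B x - B (x-δ))/δ) * (ci + ((∫ y in Set.Ioo 0 x, c y ∂ν) -
        ∫ y in Set.Ico (x-δ) x, c y ∂ν)) +
      (B x * ∫ y in Set.Ico (x-δ) x, (c y - c x) ∂ν)/δ := by
    intro δ hδ
    rw [hrep x hx, hrep (x-δ) (by linarith [hδ.2]), hmL δ hδ.1 hδ.2, hhL δ hδ.1 hδ.2,
      hsubL δ hδ.1 hδ.2, hAc]
    field_simp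
    ring
  have limA' : Tendsto (fun δ => (A x - A (x-δ))/δ) (𝓝[>] (0:ℝ)) (𝓝 A') := tendsto_slope_left hA
  have limB' : Tendsto (fun δ => (B x - B (x-δ))/δ) (𝓝[>] (0:ℝ)) (𝓝 B') := tendsto_slope_left hB
  have fac1L : Tendsto (fun δ => ca + ((ν (Set.Ici x)).toReal + (ν (Set.Ico (x-δ) x)).toReal))
      (𝓝[>] (0:ℝ)) (𝓝 (ca + (ν (Set.Ici x)).toReal)) := by
    have h0 : Tendsto (fun δ : ℝ => (ν (Set.Ici x)).toReal + (ν (Set.Ico (x-δ) x)).toReal)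
        (𝓝[>] (0:ℝ)) (𝓝 ((ν (Set.Ici x)).toReal + 0)) := tendsto_const_nhds.add kL
    have h1 : Tendsto (fun δ : ℝ => ca + ((ν (Set.Ici x)).toReal + (ν (Set.Ico (x-δ) x)).toReal))
        (𝓝[>] (0:ℝ)) (𝓝 (ca + ((ν (Set.Ici x)).toReal + 0))) := tendsto_const_nhds.add h0
    simpa using h1
  have JL : Tendsto (fun δ => ∫ y in Set.Ico (x-δ) x, c y ∂ν) (𝓝[>] (0:ℝ)) (𝓝 0) := by
    apply squeeze_zero_norm' (a := fun δ => Cc * (ν (Set.Ico (x-δ) x)).toReal)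
    · filter_upwards [Ioo_mem_nhdsGT (show (0:ℝ) < x/2 by linarith)] with δ hδ
      refine norm_setIntegral_le_of_norm_le_const (measure_lt_top _ _)
        fun y hy => hCc y ⟨by linarith [hy.1, hδ.2], by linarith [hy.2]⟩
    · simpa using kL.const_mul Cc
  have fac2L : Tendsto (fun δ => ci + ((∫ y in Set.Ioo 0 x, c y ∂ν) -
      ∫ y in Set.Ico (x-δ) x, c y ∂ν)) (𝓝[>] (0:ℝ))
      (𝓝 (ci + ∫ y in Set.Ioo 0 x, c y ∂ν)) := by
    have h0 : Tendsto (fun δ : ℝ => (∫ y in Set.Ioo 0 x, c y ∂ν) -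
        ∫ y in Set.Ico (x-δ) x, c y ∂ν) (𝓝[>] (0:ℝ))
        (𝓝 ((∫ y in Set.Ioo 0 x, c y ∂ν) - 0)) := tendsto_const_nhds.sub JL
    have h1 : Tendsto (fun δ : ℝ => ci + ((∫ y in Set.Ioo 0 x, c y ∂ν) -
        ∫ y in Set.Ico (x-δ) x, c y ∂ν)) (𝓝[>] (0:ℝ))
        (𝓝 (ci + ((∫ y in Set.Ioo 0 x, c y ∂ν) - 0))) := tendsto_const_nhds.add h0
    simpa using h1
  have T3L : Tendsto (fun δ => (B x * ∫ y in Set.Ico (x-δ) x, (c y - c x) ∂ν)/δ)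
      (𝓝[>] (0:ℝ)) (𝓝 0) := by
    apply squeeze_zero_norm' (a := fun δ => |B x| * L * (ν (Set.Ico (x-δ) x)).toReal)
    · filter_upwards [Ioo_mem_nhdsGT (show (0:ℝ) < x/2 by linarith)] with δ hδ
      have hb : ‖∫ y in Set.Ico (x-δ) x, (c y - c x) ∂ν‖ ≤
          (L*δ) * (ν (Set.Ico (x-δ) x)).toReal := by
        refine norm_setIntegral_le_of_norm_le_const (measure_lt_top _ _)
          fun y hy => ?_
        have h1 := hLip y ⟨by linarith [hy.1, hδ.2], by linarith [hy.2]⟩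
        have h2 : |y - x| ≤ δ := by
          rw [abs_of_nonpos (by linarith [hy.2])]; linarith [hy.1]
        calc ‖c y - c x‖ = |c y - c x| := rfl
          _ ≤ L * |y - x| := h1
          _ ≤ L * δ := mul_le_mul_of_nonneg_left h2 hL0
      calc ‖(B x * ∫ y in Set.Ico (x-δ) x, (c y - c x) ∂ν)/δ‖
          = |B x| * ‖∫ y in Set.Ico (x-δ) x, (c y - c x) ∂ν‖ / δ := by
            rw [norm_div, norm_mul, Real.norm_eq_abs δ, abs_of_pos hδ.1]; rfl
        _ ≤ |B x| * ((L*δ) * (ν (Set.Ico (x-δ) x)).toReal) / δ :=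
            (div_le_div_iff_of_pos_right hδ.1).mpr (mul_le_mul_of_nonneg_left hb (abs_nonneg _))
        _ = |B x| * L * (ν (Set.Ico (x-δ) x)).toReal := by
            field_simp [hδ.1.ne']
    · simpa using kL.const_mul (|B x| * L)
  have hLeft : Tendsto (fun δ => (F x - F (x-δ))/δ) (𝓝[>] (0:ℝ))
      (𝓝 (A' * (ca + (ν (Set.Ici x)).toReal) +
        B' * (ci + ∫ y in Set.Ioo 0 x, c y ∂ν))) := by
    have hG := ((limA'.mul fac1L).add (limB'.mul fac2L)).add T3L
    rw [add_zero] at hG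
    refine Tendsto.congr' ?_ hG
    filter_upwards [Ioo_mem_nhdsGT hx] with δ hδ
    exact (heqL δ hδ).symm
  exact ⟨hRight, hLeft⟩
/-- for a function `f` represented by a representing datum
`(σ_1,…,σ_n, a_1,…,a_n, s₀)`, both one-sided derivatives exist at every `x > 0` on every
leg `i`, and `f⁺(x,i) − f⁻(x,i) = −(θ/p_i)·e^{θx}·σ_i({x}) ≤ 0`; in particular `f(·,i)` is
differentiable at `x` whenever `σ_i` has no atom at `x`. -/
theorem stmt_10 (n : ℕ) (hn : 1 ≤ n) (p : Fin n → ℝ)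
    (hp : ∀ i, 0 < p i) (hpsum : ∑ i, p i = 1)
    (r : ℝ) (hr : 0 < r) (θ : ℝ) (hθ : θ = Real.sqrt (2 * r))
    (σ : Fin n → Measure ℝ) [∀ k, IsFiniteMeasure (σ k)]
    (hσsupp : ∀ k, σ k (Set.Iic 0) = 0)
    (a : Fin n → ℝ) (ha : ∀ k, 0 ≤ a k) (s₀ : ℝ) (hs₀ : 0 ≤ s₀)
    (hnorm : s₀ + ∑ k, ((σ k (Set.Ioi 0)).toReal + a k) = 1)
    (f : ℝ → Fin n → ℝ)
    (hf : ∀ x i, f x i = s₀ * Real.exp (-θ * x) +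
      ∑ k, ((∫ y in Set.Ioi (0:ℝ), martinKernel0 n p θ x i y k ∂(σ k)) +
        a k * martinKernel0Inf n p θ x i k)) :
    ∀ x > (0:ℝ), ∀ i, ∃ dplus dminus : ℝ,
      Tendsto (fun δ => (f (x + δ) i - f x i) / δ) (𝓝[>] 0) (𝓝 dplus) ∧
      Tendsto (fun δ => (f x i - f (x - δ) i) / δ) (𝓝[>] 0) (𝓝 dminus) ∧
      dplus - dminus = -(θ / p i) * Real.exp (θ * x) * (σ i {x}).toReal ∧
      dplus - dminus ≤ 0 ∧
      (σ i {x} = 0 → HasDerivAt (fun t => f t i) dplus x) := by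
  intro x hx i
  have hθ0 : 0 ≤ θ := hθ ▸ Real.sqrt_nonneg _
  have hpi := hp i
  -- derivatives
  have hpos : HasDerivAt (fun t : ℝ => θ*t) θ x := by simpa using (hasDerivAt_id x).const_mul θ
  have hneg : HasDerivAt (fun t : ℝ => -θ*t) (-θ) x := by
    simpa using (hasDerivAt_id x).const_mul (-θ)
  have hdB : HasDerivAt (fun t : ℝ => Real.exp (-θ*t)) (Real.exp (-θ*x) * -θ) x := hneg.exp
  have hdA : HasDerivAt (fun t : ℝ => 1/p i * Real.sinh (θ*t) + Real.exp (-θ*t))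
      (1/p i * (Real.cosh (θ*x) * θ) + Real.exp (-θ*x) * -θ) x :=
    ((hpos.sinh).const_mul (1/p i)).add hdB
  have hc : Continuous fun y : ℝ => 1 + 1/p i * Real.exp (θ*y) * Real.sinh (θ*y) := by fun_prop
  have hE1 : Real.exp (-θ*x) * Real.exp (θ*x) = 1 := by rw [← Real.exp_add]; simp
  have hAc : 1/p i * Real.sinh (θ*x) + Real.exp (-θ*x) =
      Real.exp (-θ*x) * (1 + 1/p i * Real.exp (θ*x) * Real.sinh (θ*x)) := by
    linear_combination (-(1/p i * Real.sinh (θ*x))) * hE1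
  have hES : ∀ t : ℝ, Real.exp (θ*t) * Real.sinh (θ*t) = (Real.exp (2*θ*t) - 1)/2 := by
    intro t
    rw [Real.sinh_eq, Real.exp_neg, show 2*θ*t = θ*t + θ*t from by ring, Real.exp_add]
    field_simp [Real.exp_ne_zero]
  -- Lipschitz bound
  set L : ℝ := θ/p i * Real.exp (2*θ*(x+1)) with hL_def
  have hL0 : 0 ≤ L := mul_nonneg (div_nonneg hθ0 hpi.le) (Real.exp_pos _).le
  have hLip : ∀ y ∈ Set.Icc (x/2) (x+1),
      |(1 + 1/p i * Real.exp (θ*y) * Real.sinh (θ*y)) -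
        (1 + 1/p i * Real.exp (θ*x) * Real.sinh (θ*x))| ≤ L * |y - x| := by
    intro y hy
    have key := exp_abs_sub_le (a := 2*θ*x) (b := 2*θ*y) (M := 2*θ*(x+1))
      (by nlinarith : 2*θ*x ≤ 2*θ*(x+1)) (by nlinarith [hy.2] : 2*θ*y ≤ 2*θ*(x+1))
    have h1 : (1 + 1/p i * Real.exp (θ*y) * Real.sinh (θ*y)) -
        (1 + 1/p i * Real.exp (θ*x) * Real.sinh (θ*x)) =
        1/(2*p i) * (Real.exp (2*θ*y) - Real.exp (2*θ*x)) := by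
      rw [mul_assoc, mul_assoc, hES y, hES x]
      field_simp
      ring
    rw [h1, abs_mul, abs_of_nonneg (show (0:ℝ) ≤ 1/(2*p i) from by positivity)]
    calc 1/(2*p i) * |Real.exp (2*θ*y) - Real.exp (2*θ*x)|
        ≤ 1/(2*p i) * (Real.exp (2*θ*(x+1)) * |2*θ*y - 2*θ*x|) :=
          mul_le_mul_of_nonneg_left key (by positivity)
      _ = L * |y - x| := by
          rw [show 2*θ*y - 2*θ*x = (2*θ)*(y - x) from by ring, abs_mul,
            abs_of_nonneg (show (0:ℝ) ≤ 2*θ from by linarith), hL_def]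
          field_simp
  -- representation
  set S : ℝ := s₀ + ∑ k ∈ Finset.univ.erase i, ((σ k (Set.Ioi 0)).toReal + a k) with hS_def
  have hrep : ∀ t, 0 < t → f t i =
      (1/p i * Real.sinh (θ*t) + Real.exp (-θ*t)) * (a i + (σ i (Set.Ici t)).toReal) +
      Real.exp (-θ*t) * (S + ∫ y in Set.Ioo 0 t,
        (1 + 1/p i * Real.exp (θ*y) * Real.sinh (θ*y)) ∂σ i) := by
    intro t ht
    have hintc : IntegrableOn (fun y : ℝ => 1 + 1/p i * Real.exp (θ*y) * Real.sinh (θ*y))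
        (Set.Icc 0 t) (σ i) :=
      ContinuousOn.integrableOn_compact isCompact_Icc hc.continuousOn
    have hint_i : (∫ y in Set.Ioi 0, martinKernel0 n p θ t i y i ∂σ i) =
        (1/p i * Real.sinh (θ*t) + Real.exp (-θ*t)) * (σ i (Set.Ici t)).toReal +
        Real.exp (-θ*t) * ∫ y in Set.Ioo 0 t,
          (1 + 1/p i * Real.exp (θ*y) * Real.sinh (θ*y)) ∂σ i := by
      have hsplit : Set.Ioi (0:ℝ) = Set.Ioo 0 t ∪ Set.Ici t := (Set.Ioo_union_Ici_eq_Ioi ht).symm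
      have hd : Disjoint (Set.Ioo (0:ℝ) t) (Set.Ici t) :=
        (Set.Iio_disjoint_Ici le_rfl).mono_left Set.Ioo_subset_Iio_self
      have hcong1 : Set.EqOn (fun y => martinKernel0 n p θ t i y i)
          (fun y => Real.exp (-θ*t) * (1 + 1/p i * Real.exp (θ*y) * Real.sinh (θ*y)))
          (Set.Ioo 0 t) := fun y hy => by
        simp only [martinKernel0, if_true, eq_self_iff_true]
        exact if_neg (not_le.mpr hy.2)
      have hcong2 : Set.EqOn (fun y => martinKernel0 n p θ t i y i)
          (fun _ => 1/p i * Real.sinh (θ*t) + Real.exp (-θ*t)) (Set.Ici t) := fun y hy => by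
        simp only [martinKernel0, if_true, eq_self_iff_true]
        exact if_pos (hy : t ≤ y)
      have i1 : IntegrableOn (fun y => martinKernel0 n p θ t i y i) (Set.Ioo 0 t) (σ i) := by
        rw [integrableOn_congr_fun hcong1 measurableSet_Ioo]
        exact (hintc.mono_set Set.Ioo_subset_Icc_self).const_mul _
      have i2 : IntegrableOn (fun y => martinKernel0 n p θ t i y i) (Set.Ici t) (σ i) := by
        rw [integrableOn_congr_fun hcong2 measurableSet_Ici]
        exact integrableOn_const (measure_ne_top _ _)
      rw [hsplit, setIntegral_union hd measurableSet_Ici i1 i2,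
        setIntegral_congr_fun measurableSet_Ioo hcong1,
        setIntegral_congr_fun measurableSet_Ici hcong2,
        integral_const_mul, setIntegral_const, smul_eq_mul, measureReal_def]
      ring
    rw [hf t i, ← Finset.add_sum_erase Finset.univ _ (Finset.mem_univ i)]
    have hterm : ∀ k ∈ Finset.univ.erase i,
        (∫ y in Set.Ioi (0:ℝ), martinKernel0 n p θ t i y k ∂σ k) +
          a k * martinKernel0Inf n p θ t i k =
        ((σ k (Set.Ioi 0)).toReal + a k) * Real.exp (-θ*t) := by
      intro k hk
      have hik : i ≠ k := (Finset.ne_of_mem_erase hk).symm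
      simp only [martinKernel0, martinKernel0Inf, if_neg hik]
      rw [setIntegral_const, smul_eq_mul, measureReal_def]
      ring
    rw [Finset.sum_congr rfl hterm, ← Finset.sum_mul, hint_i]
    simp only [martinKernel0Inf, hS_def, if_true, eq_self_iff_true]
    ring
  obtain ⟨h1, h2⟩ := one_sided_aux (σ i)
    (fun t : ℝ => 1/p i * Real.sinh (θ*t) + Real.exp (-θ*t))
    (fun t : ℝ => Real.exp (-θ*t))
    (fun y : ℝ => 1 + 1/p i * Real.exp (θ*y) * Real.sinh (θ*y))
    (1/p i * (Real.cosh (θ*x) * θ) + Real.exp (-θ*x) * -θ)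
    (Real.exp (-θ*x) * -θ) x hx hdA hdB hc hAc L hL0 hLip (a i) S (fun t => f t i) hrep
  have hIci : (σ i (Set.Ici x)).toReal = (σ i (Set.Ioi x)).toReal + (σ i {x}).toReal := by
    have hu : Set.Ici x = {x} ∪ Set.Ioi x := by rw [← Set.insert_eq, Set.Ioi_insert]
    have hdisj : Disjoint ({x} : Set ℝ) (Set.Ioi x) := Set.disjoint_singleton_left.mpr (by simp)
    rw [hu, measure_union hdisj measurableSet_Ioi,
      ENNReal.toReal_add (measure_ne_top _ _) (measure_ne_top _ _)]
    ring
  have hkey : (Real.exp (-θ*x) * -θ) * (1 + 1/p i * Real.exp (θ*x) * Real.sinh (θ*x)) -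
      (1/p i * (Real.cosh (θ*x) * θ) + Real.exp (-θ*x) * -θ) = -(θ/p i) * Real.exp (θ*x) := by
    rw [Real.sinh_eq, Real.cosh_eq, neg_mul, Real.exp_neg]
    field_simp [Real.exp_ne_zero]
    ring
  have hdiff : ((1/p i * (Real.cosh (θ*x) * θ) + Real.exp (-θ*x) * -θ) *
        (a i + (σ i (Set.Ioi x)).toReal) +
      (Real.exp (-θ*x) * -θ) * (S + ((∫ y in Set.Ioo 0 x,
        (1 + 1/p i * Real.exp (θ*y) * Real.sinh (θ*y)) ∂σ i) +
        (1 + 1/p i * Real.exp (θ*x) * Real.sinh (θ*x)) * (σ i {x}).toReal))) -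
      ((1/p i * (Real.cosh (θ*x) * θ) + Real.exp (-θ*x) * -θ) *
        (a i + (σ i (Set.Ici x)).toReal) +
      (Real.exp (-θ*x) * -θ) * (S + ∫ y in Set.Ioo 0 x,
        (1 + 1/p i * Real.exp (θ*y) * Real.sinh (θ*y)) ∂σ i)) =
      -(θ/p i) * Real.exp (θ*x) * (σ i {x}).toReal := by
    rw [hIci]
    linear_combination (σ i {x}).toReal * hkey
  refine ⟨_, _, h1, h2, hdiff, ?_, ?_⟩
  · rw [hdiff]
    have h0 : 0 ≤ θ/p i * Real.exp (θ*x) * (σ i {x}).toReal :=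
      mul_nonneg (mul_nonneg (div_nonneg hθ0 hpi.le) (Real.exp_pos _).le) ENNReal.toReal_nonneg
    rw [show -(θ/p i) * Real.exp (θ*x) * (σ i {x}).toReal =
      -(θ/p i * Real.exp (θ*x) * (σ i {x}).toReal) from by ring]
    exact neg_nonpos.mpr h0
  · intro hatom
    have hm0 : (σ i {x}).toReal = 0 := by rw [hatom]; simp
    have hdm : ((1/p i * (Real.cosh (θ*x) * θ) + Real.exp (-θ*x) * -θ) *
        (a i + (σ i (Set.Ici x)).toReal) +
      (Real.exp (-θ*x) * -θ) * (S + ∫ y in Set.Ioo 0 x,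
        (1 + 1/p i * Real.exp (θ*y) * Real.sinh (θ*y)) ∂σ i)) =
      ((1/p i * (Real.cosh (θ*x) * θ) + Real.exp (-θ*x) * -θ) *
        (a i + (σ i (Set.Ioi x)).toReal) +
      (Real.exp (-θ*x) * -θ) * (S + ((∫ y in Set.Ioo 0 x,
        (1 + 1/p i * Real.exp (θ*y) * Real.sinh (θ*y)) ∂σ i) +
        (1 + 1/p i * Real.exp (θ*x) * Real.sinh (θ*x)) * (σ i {x}).toReal))) := by
      have := hdiff
      rw [hm0] at this ⊢
      linarith
    exact hasDerivAt_of_sided h1 (hdm ▸ h2)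
end

section
/- Let f be the function represented by a representing datum normalized at (x₀,i₀). Then for every x ≥ x₀ the right derivative f⁺(x,i₀) exists and τ_{i₀}((x,∞)) + b_{i₀} = p_{i₀} · ψ̃(x₀,i₀) · e^{−θx} · ( f⁺(x,i₀) + θ·f(x,i₀) ). -/
open Filter Topology MeasureTheory

/-- The minimal harmonic function `N_k(x,i)` of the Brownian spider attached to the
boundary point `(∞,k)`. -/
noncomputable def spiderN (n : ℕ) (p : Fin n → ℝ) (θ : ℝ) (x : ℝ) (i k : Fin n) : ℝ :=
  if i = k then (1 / p i) * Real.sinh (θ * x) + Real.exp (-θ * x)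
  else Real.exp (-θ * x)

/-- The function `ψ̃(x,i) = (1/θ)((1/p_i)·sinh(θx) + e^{−θx})`. -/
noncomputable def spiderPsiT (n : ℕ) (p : Fin n → ℝ) (θ : ℝ) (x : ℝ) (i : Fin n) : ℝ :=
  (1/θ) * ((1 / p i) * Real.sinh (θ * x) + Real.exp (-θ * x))

private lemma exp_sub_exp_le' {a c : ℝ} (_ : c ≤ a) :
    Real.exp a - Real.exp c ≤ Real.exp a * (a - c) := by
  have h1 : Real.exp c = Real.exp a * Real.exp (c - a) := by
    rw [← Real.exp_add]; ring_nf
  have h2 := Real.add_one_le_exp (c - a)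
  have h3 := Real.exp_pos a
  nlinarith

private noncomputable def phiF (pp θ u : ℝ) : ℝ :=
  (1 / pp) * Real.sinh (θ * u) + Real.exp (-θ * u)

private noncomputable def hFF (pp θ x₀ y : ℝ) : ℝ :=
  phiF pp θ y / (Real.exp (-θ * max x₀ y) * phiF pp θ (min x₀ y))

private lemma phiF_pos {pp θ : ℝ} (hpp : 0 < pp) (hθ : 0 < θ) {u : ℝ} (hu : 0 ≤ u) :
    0 < phiF pp θ u := by
  have h1 : 0 ≤ (1 / pp) * Real.sinh (θ * u) :=
    mul_nonneg (by positivity) (Real.sinh_nonneg_iff.mpr (by positivity))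
  have h2 := Real.exp_pos (-θ * u)
  unfold phiF; linarith

private lemma continuous_phiF (pp θ : ℝ) : Continuous (phiF pp θ) := by
  unfold phiF; fun_prop

private lemma keyid {pp θ v y : ℝ} (hpp : 0 < pp) :
    Real.exp (-θ*v) * Real.exp (θ*y) * phiF pp θ y - phiF pp θ v
      = Real.exp (-θ*v) * (1/(2*pp)) * (Real.exp (2*(θ*y)) - Real.exp (2*(θ*v))) := by
  unfold phiF
  rw [Real.sinh_eq, Real.sinh_eq]
  rw [show -θ*v = -(θ*v) by ring, show -θ*y = -(θ*y) by ring]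
  rw [Real.exp_neg (θ*v), Real.exp_neg (θ*y)]
  rw [show (2:ℝ)*(θ*y) = θ*y + θ*y by ring, show (2:ℝ)*(θ*v) = θ*v + θ*v by ring,
    Real.exp_add, Real.exp_add]
  have h1 := Real.exp_ne_zero (θ*v)
  have h2 := Real.exp_ne_zero (θ*y)
  field_simp
  ring

private lemma keybound {pp θ x δ y : ℝ} (hpp : 0 < pp) (hθ : 0 < θ)
    (hδ : 0 < δ) (hδ1 : δ ≤ 1) (hy1 : x < y) (hy2 : y ≤ x + δ) :
    |Real.exp (-θ*(x+δ)) * Real.exp (θ*y) * phiF pp θ y - phiF pp θ (x+δ)|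
      ≤ θ/pp * Real.exp (θ*(x+1)) * δ := by
  rw [keyid hpp]
  have hle : Real.exp (2*(θ*y)) ≤ Real.exp (2*(θ*(x+δ))) :=
    Real.exp_le_exp.mpr (by nlinarith)
  have hpos : 0 < Real.exp (-θ*(x+δ)) * (1/(2*pp)) := by positivity
  have habs : |Real.exp (-θ*(x+δ)) * (1/(2*pp)) * (Real.exp (2*(θ*y)) - Real.exp (2*(θ*(x+δ))))|
      = Real.exp (-θ*(x+δ)) * (1/(2*pp)) * (Real.exp (2*(θ*(x+δ))) - Real.exp (2*(θ*y))) := by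
    rw [abs_of_nonpos (mul_nonpos_of_nonneg_of_nonpos hpos.le (sub_nonpos.mpr hle))]
    ring
  rw [habs]
  have h6 : Real.exp (2*(θ*(x+δ))) - Real.exp (2*(θ*y))
      ≤ Real.exp (2*(θ*(x+δ))) * (2*(θ*(x+δ)) - 2*(θ*y)) := exp_sub_exp_le' (by nlinarith)
  have h7 : Real.exp (-θ*(x+δ)) * Real.exp (2*(θ*(x+δ))) = Real.exp (θ*(x+δ)) := by
    rw [← Real.exp_add]; ring_nf
  have h8 : Real.exp (θ*(x+δ)) ≤ Real.exp (θ*(x+1)) := Real.exp_le_exp.mpr (by nlinarith)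
  calc Real.exp (-θ*(x+δ)) * (1/(2*pp)) * (Real.exp (2*(θ*(x+δ))) - Real.exp (2*(θ*y)))
      ≤ Real.exp (-θ*(x+δ)) * (1/(2*pp)) * (Real.exp (2*(θ*(x+δ))) * (2*(θ*(x+δ)) - 2*(θ*y))) :=
        mul_le_mul_of_nonneg_left h6 hpos.le
    _ = (Real.exp (-θ*(x+δ)) * Real.exp (2*(θ*(x+δ)))) * (θ/pp) * ((x+δ) - y) := by ring
    _ = Real.exp (θ*(x+δ)) * (θ/pp) * ((x+δ) - y) := by rw [h7]
    _ ≤ Real.exp (θ*(x+1)) * (θ/pp) * δ := by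
        have h9 : (x+δ) - y ≤ δ := by linarith
        have h10 : 0 ≤ (x+δ) - y := by linarith
        have h11 : 0 < θ/pp := by positivity
        have h12 := mul_le_mul h8 h9 h10 (Real.exp_pos (θ*(x+1))).le
        nlinarith [h12, h11]
    _ = θ/pp * Real.exp (θ*(x+1)) * δ := by ring

private lemma green_ne {n : ℕ} {p : Fin n → ℝ} {θ x₀ : ℝ} {i₀ k : Fin n} (hθ : θ ≠ 0)
    (hik : ¬ (i₀ = k)) (x' y : ℝ) :
    spiderGreen n p θ x' i₀ y k / spiderGreen n p θ x₀ i₀ y k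
      = Real.exp (-θ * x') * Real.exp (θ * x₀) := by
  simp only [spiderGreen, if_neg hik]
  rw [show -θ*x₀ = -(θ*x₀) by ring, Real.exp_neg]
  have h1 := Real.exp_ne_zero (θ*x₀)
  have h2 := Real.exp_ne_zero (-θ*y)
  have h3 := Real.exp_ne_zero (-θ*x')
  field_simp

private lemma green_in {n : ℕ} {p : Fin n → ℝ} {θ x₀ : ℝ} {i₀ : Fin n} (hpp : 0 < p i₀)
    (hθ : 0 < θ) (hx₀ : 0 < x₀) {x' : ℝ} (hx' : x₀ ≤ x') {y : ℝ} (hy : y ∈ Set.Ioc (0:ℝ) x') :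
    spiderGreen n p θ x' i₀ y i₀ / spiderGreen n p θ x₀ i₀ y i₀
      = Real.exp (-θ * x') * hFF (p i₀) θ x₀ y := by
  unfold spiderGreen hFF phiF
  rw [if_pos rfl, if_pos rfl, max_eq_left hy.2, min_eq_right hy.2]
  have h4 : (1 / p i₀) * Real.sinh (θ * min x₀ y) + Real.exp (-θ * min x₀ y) ≠ 0 := by
    have := phiF_pos hpp hθ (le_min hx₀.le hy.1.le)
    unfold phiF at this; exact this.ne'
  have h5 := Real.exp_ne_zero (-θ * max x₀ y)
  have h6 := Real.exp_ne_zero (-θ * x')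
  field_simp

private lemma green_out {n : ℕ} {p : Fin n → ℝ} {θ x₀ : ℝ} {i₀ : Fin n} (hpp : 0 < p i₀)
    (hθ : 0 < θ) (hx₀ : 0 < x₀) {x' : ℝ} (hx' : x₀ ≤ x') {y : ℝ} (hy : y ∈ Set.Ioi x') :
    spiderGreen n p θ x' i₀ y i₀ / spiderGreen n p θ x₀ i₀ y i₀
      = phiF (p i₀) θ x' / phiF (p i₀) θ x₀ := by
  have hyx' : x' ≤ y := (Set.mem_Ioi.mp hy).le
  have hyx₀ : x₀ ≤ y := le_trans hx' hyx'
  unfold spiderGreen phiF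
  rw [if_pos rfl, if_pos rfl, max_eq_right hyx', min_eq_left hyx',
    max_eq_right hyx₀, min_eq_left hyx₀]
  have h4 : (1 / p i₀) * Real.sinh (θ * x₀) + Real.exp (-θ * x₀) ≠ 0 := by
    have := phiF_pos hpp hθ hx₀.le
    unfold phiF at this; exact this.ne'
  have h5 := Real.exp_ne_zero (-θ * y)
  field_simp

private lemma hasDeriv_g (pp θ A B x : ℝ) :
    HasDerivAt (fun u => Real.exp (-θ*u) * A + phiF pp θ u * B)
      ((-θ * Real.exp (-θ*x)) * A
        + ((1/pp) * (θ * Real.cosh (θ*x)) + (-θ * Real.exp (-θ*x))) * B) x := by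
  have h1 : HasDerivAt (fun u : ℝ => -θ * u) (-θ) x := by
    simpa using (hasDerivAt_id x).const_mul (-θ)
  have h2 : HasDerivAt (fun u : ℝ => Real.exp (-θ*u)) (-θ * Real.exp (-θ*x)) x := by
    simpa [mul_comm] using h1.exp
  have h3 : HasDerivAt (fun u : ℝ => θ * u) θ x := by
    simpa using (hasDerivAt_id x).const_mul θ
  have h4 : HasDerivAt (fun u : ℝ => Real.sinh (θ*u)) (θ * Real.cosh (θ*x)) x := by
    simpa [mul_comm] using h3.sinh
  unfold phiF
  exact (h2.mul_const A).add (((h4.const_mul (1/pp)).add h2).mul_const B)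

/-- for a function `f` represented by a representing datum normalized at
`(x₀,i₀)`, for every `x ≥ x₀` the right derivative `f⁺(x,i₀)` exists and
`τ_{i₀}((x,∞)) + b_{i₀} = p_{i₀}·ψ̃(x₀,i₀)·e^{−θx}·(f⁺(x,i₀) + θ·f(x,i₀))`. -/
theorem stmt_11 (n : ℕ) (hn : 1 ≤ n) (p : Fin n → ℝ)
    (hp : ∀ i, 0 < p i) (hpsum : ∑ i, p i = 1)
    (r : ℝ) (hr : 0 < r) (θ : ℝ) (hθ : θ = Real.sqrt (2 * r))
    (x₀ : ℝ) (hx₀ : 0 < x₀) (i₀ : Fin n)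
    (τ : Fin n → Measure ℝ) [∀ k, IsFiniteMeasure (τ k)]
    (hτsupp : ∀ k, τ k (Set.Iic 0) = 0)
    (b : Fin n → ℝ) (hb : ∀ k, 0 ≤ b k) (t₀ : ℝ) (ht₀ : 0 ≤ t₀)
    (hnorm : t₀ + ∑ k, ((τ k (Set.Ioi 0)).toReal + b k) = 1)
    (f : ℝ → Fin n → ℝ)
    (hf : ∀ x i, f x i = t₀ * Real.exp (-θ * (x - x₀)) +
      ∑ k, ((∫ y in Set.Ioi (0:ℝ),
          spiderGreen n p θ x i y k / spiderGreen n p θ x₀ i₀ y k ∂(τ k)) +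
        b k * (spiderN n p θ x i k / spiderN n p θ x₀ i₀ k))) :
    ∀ x, x₀ ≤ x → ∃ d : ℝ,
      Tendsto (fun δ => (f (x + δ) i₀ - f x i₀) / δ) (𝓝[>] 0) (𝓝 d) ∧
      (τ i₀ (Set.Ioi x)).toReal + b i₀ =
        p i₀ * spiderPsiT n p θ x₀ i₀ * Real.exp (-θ * x) * (d + θ * f x i₀) := by
  intro x hx
  have hθ0 : 0 < θ := by rw [hθ]; exact Real.sqrt_pos.mpr (by linarith)
  have hpi : 0 < p i₀ := hp i₀
  have hx0 : (0:ℝ) < x := lt_of_lt_of_le hx₀ hx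
  have hφx₀ : 0 < phiF (p i₀) θ x₀ := phiF_pos hpi hθ0 hx₀.le
  -- integrability of hFF on bounded intervals
  have hcont : ∀ a c : ℝ, 0 ≤ a → IntegrableOn (hFF (p i₀) θ x₀) (Set.Ioc a c) (τ i₀) := by
    intro a c ha
    have hc : ContinuousOn (hFF (p i₀) θ x₀) (Set.Icc a c) := by
      unfold hFF
      apply ContinuousOn.div
      · exact (continuous_phiF _ _).continuousOn
      · apply Continuous.continuousOn
        exact (by fun_prop : Continuous fun y : ℝ => Real.exp (-θ * max x₀ y)).mul
          ((continuous_phiF _ _).comp (continuous_const.min continuous_id))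
      · intro y hy
        have h0y : 0 ≤ min x₀ y := le_min hx₀.le (ha.trans hy.1)
        exact (mul_pos (Real.exp_pos _) (phiF_pos hpi hθ0 h0y)).ne'
    exact hc.integrableOn_Icc.mono_set Set.Ioc_subset_Icc_self
  -- the key representation formula
  have key : ∀ x' : ℝ, x ≤ x' → f x' i₀ =
      Real.exp (-θ*x') * ((t₀ + ∑ k ∈ Finset.univ.erase i₀, ((τ k (Set.Ioi 0)).toReal + b k))
            * Real.exp (θ*x₀)
          + ∫ y in Set.Ioc 0 x, hFF (p i₀) θ x₀ y ∂(τ i₀))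
        + phiF (p i₀) θ x' * (((τ i₀ (Set.Ioi x)).toReal + b i₀) / phiF (p i₀) θ x₀)
        + (Real.exp (-θ*x') * (∫ y in Set.Ioc x x', hFF (p i₀) θ x₀ y ∂(τ i₀))
           - phiF (p i₀) θ x' * ((τ i₀ (Set.Ioc x x')).toReal / phiF (p i₀) θ x₀)) := by
    intro x' hxx'
    have hx'0 : (0:ℝ) ≤ x' := (hx0.trans_le hxx').le
    have hx₀x' : x₀ ≤ x' := le_trans hx hxx'
    rw [hf]
    rw [← Finset.add_sum_erase Finset.univ _ (Finset.mem_univ i₀)]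
    have hsum : (∑ k ∈ Finset.univ.erase i₀,
        ((∫ y in Set.Ioi (0:ℝ), spiderGreen n p θ x' i₀ y k / spiderGreen n p θ x₀ i₀ y k ∂(τ k))
          + b k * (spiderN n p θ x' i₀ k / spiderN n p θ x₀ i₀ k)))
        = (∑ k ∈ Finset.univ.erase i₀, ((τ k (Set.Ioi 0)).toReal + b k))
            * (Real.exp (-θ*x') * Real.exp (θ*x₀)) := by
      rw [Finset.sum_mul]
      refine Finset.sum_congr rfl fun k hk => ?_
      have hik : ¬ (i₀ = k) := fun e => (Finset.mem_erase.mp hk).1 e.symm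
      simp only [green_ne hθ0.ne' hik]
      rw [setIntegral_const, smul_eq_mul, measureReal_def]
      simp only [spiderN, if_neg hik]
      have hNr : Real.exp (-θ*x') / Real.exp (-θ*x₀) = Real.exp (-θ*x') * Real.exp (θ*x₀) := by
        rw [← Real.exp_sub, ← Real.exp_add]; congr 1; ring
      rw [hNr]; ring
    rw [hsum]
    have hInt1 : IntegrableOn
        (fun y => spiderGreen n p θ x' i₀ y i₀ / spiderGreen n p θ x₀ i₀ y i₀)
        (Set.Ioc 0 x') (τ i₀) :=
      MeasureTheory.IntegrableOn.congr_fun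
        ((hcont 0 x' le_rfl).const_mul (Real.exp (-θ*x')))
        (fun y hy => (green_in hpi hθ0 hx₀ hx₀x' hy).symm) measurableSet_Ioc
    have hInt2 : IntegrableOn
        (fun y => spiderGreen n p θ x' i₀ y i₀ / spiderGreen n p θ x₀ i₀ y i₀)
        (Set.Ioi x') (τ i₀) :=
      MeasureTheory.IntegrableOn.congr_fun
        (integrableOn_const (measure_ne_top _ _))
        (fun y hy => (green_out hpi hθ0 hx₀ hx₀x' hy).symm) measurableSet_Ioi
    have hmeasr : (τ i₀ (Set.Ioi x')).toReal
        = (τ i₀ (Set.Ioi x)).toReal - (τ i₀ (Set.Ioc x x')).toReal := by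
      have h1 : τ i₀ (Set.Ioc x x') + τ i₀ (Set.Ioi x') = τ i₀ (Set.Ioi x) := by
        rw [← measure_union (Set.Ioc_disjoint_Ioi le_rfl) measurableSet_Ioi,
          Set.Ioc_union_Ioi_eq_Ioi hxx']
      have h2 : (τ i₀ (Set.Ioc x x')).toReal + (τ i₀ (Set.Ioi x')).toReal
          = (τ i₀ (Set.Ioi x)).toReal := by
        rw [← ENNReal.toReal_add (measure_ne_top _ _) (measure_ne_top _ _), h1]
      linarith
    have hsplitIoi : (∫ y in Set.Ioi (0:ℝ),
          spiderGreen n p θ x' i₀ y i₀ / spiderGreen n p θ x₀ i₀ y i₀ ∂(τ i₀))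
        = Real.exp (-θ*x') * ((∫ y in Set.Ioc 0 x, hFF (p i₀) θ x₀ y ∂(τ i₀))
            + ∫ y in Set.Ioc x x', hFF (p i₀) θ x₀ y ∂(τ i₀))
          + ((τ i₀ (Set.Ioi x)).toReal - (τ i₀ (Set.Ioc x x')).toReal)
              * (phiF (p i₀) θ x' / phiF (p i₀) θ x₀) := by
      rw [show Set.Ioi (0:ℝ) = Set.Ioc 0 x' ∪ Set.Ioi x' from
          (Set.Ioc_union_Ioi_eq_Ioi hx'0).symm,
        setIntegral_union (Set.Ioc_disjoint_Ioi le_rfl) measurableSet_Ioi hInt1 hInt2,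
        setIntegral_congr_fun measurableSet_Ioc
          (fun y hy => green_in hpi hθ0 hx₀ hx₀x' hy),
        setIntegral_congr_fun measurableSet_Ioi
          (fun y hy => green_out hpi hθ0 hx₀ hx₀x' hy),
        setIntegral_const, measureReal_def, integral_const_mul,
        show Set.Ioc (0:ℝ) x' = Set.Ioc 0 x ∪ Set.Ioc x x' from
          (Set.Ioc_union_Ioc_eq_Ioc hx0.le hxx').symm,
        setIntegral_union (Set.Ioc_disjoint_Ioc_of_le le_rfl) measurableSet_Ioc
          (hcont 0 x le_rfl) (hcont x x' hx0.le),
        hmeasr, smul_eq_mul]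
    rw [hsplitIoi]
    rw [show -θ*(x'-x₀) = -θ*x' + θ*x₀ by ring, Real.exp_add]
    simp only [spiderN, if_true]
    unfold phiF
    ring
  set A := (t₀ + ∑ k ∈ Finset.univ.erase i₀, ((τ k (Set.Ioi 0)).toReal + b k))
        * Real.exp (θ*x₀)
      + ∫ y in Set.Ioc 0 x, hFF (p i₀) θ x₀ y ∂(τ i₀) with hA
  set B := ((τ i₀ (Set.Ioi x)).toReal + b i₀) / phiF (p i₀) θ x₀ with hB
  have hfxg : f x i₀ = Real.exp (-θ*x) * A + phiF (p i₀) θ x * B := by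
    rw [key x le_rfl]
    simp [Set.Ioc_self]
  refine ⟨(-θ * Real.exp (-θ*x)) * A
      + ((1/(p i₀)) * (θ * Real.cosh (θ*x)) + (-θ * Real.exp (-θ*x))) * B, ?_, ?_⟩
  · -- the limit statement
    have hmeas0 : Tendsto (fun δ : ℝ => (τ i₀ (Set.Ioc x (x+δ))).toReal)
        (𝓝[>] (0:ℝ)) (𝓝 0) := by
      have hseq : Tendsto (fun m : ℕ => τ i₀ (Set.Ioc x (x + 1/((m:ℝ)+1)))) atTop
          (𝓝 (τ i₀ (⋂ m : ℕ, Set.Ioc x (x + 1/((m:ℝ)+1))))) := by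
        apply tendsto_measure_iInter_atTop
          (fun m => measurableSet_Ioc.nullMeasurableSet) ?_ ⟨0, measure_ne_top _ _⟩
        intro a c hac
        apply Set.Ioc_subset_Ioc le_rfl
        have hc1 : ((a:ℝ)+1) ≤ ((c:ℝ)+1) := by
          have : (a:ℝ) ≤ (c:ℝ) := Nat.cast_le.mpr hac
          linarith
        have : (1:ℝ)/((c:ℝ)+1) ≤ 1/((a:ℝ)+1) :=
          one_div_le_one_div_of_le (by positivity) hc1
        linarith
      have hempty : (⋂ m : ℕ, Set.Ioc x (x + 1/((m:ℝ)+1))) = ∅ := by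
        ext y
        simp only [Set.mem_iInter, Set.mem_Ioc, Set.mem_empty_iff_false, iff_false,
          not_forall]
        by_cases hxy : x < y
        · obtain ⟨m, hm⟩ := exists_nat_one_div_lt (sub_pos.mpr hxy)
          exact ⟨m, fun hc => by linarith [hc.2]⟩
        · exact ⟨0, fun hc => hxy hc.1⟩
      rw [hempty] at hseq
      have hseq' : Tendsto (fun m : ℕ => (τ i₀ (Set.Ioc x (x + 1/((m:ℝ)+1)))).toReal)
          atTop (𝓝 0) := by
        simpa [measure_empty, Function.comp_def] using (ENNReal.tendsto_toReal (by simp)).comp hseq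
      rw [Metric.tendsto_nhdsWithin_nhds]
      intro ε hε
      obtain ⟨m, hm⟩ := (hseq'.eventually (gt_mem_nhds hε)).exists
      refine ⟨1/((m:ℝ)+1), by positivity, ?_⟩
      intro δ hδ hdist
      rw [Real.dist_eq, sub_zero] at hdist
      rw [Real.dist_eq, sub_zero, abs_of_nonneg ENNReal.toReal_nonneg]
      have hδm : δ ≤ 1/((m:ℝ)+1) := le_of_lt (lt_of_le_of_lt (le_abs_self δ) hdist)
      have hle2 : (τ i₀ (Set.Ioc x (x+δ))).toReal
          ≤ (τ i₀ (Set.Ioc x (x + 1/((m:ℝ)+1)))).toReal :=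
        ENNReal.toReal_mono (measure_ne_top _ _)
          (measure_mono (Set.Ioc_subset_Ioc le_rfl (by linarith)))
      exact lt_of_le_of_lt hle2 hm
    set Cc := θ/(p i₀) * Real.exp (θ*(x+1)) / phiF (p i₀) θ x₀ with hCc
    have hRtend : Tendsto (fun δ : ℝ =>
        (Real.exp (-θ*(x+δ)) * (∫ y in Set.Ioc x (x+δ), hFF (p i₀) θ x₀ y ∂(τ i₀))
          - phiF (p i₀) θ (x+δ) * ((τ i₀ (Set.Ioc x (x+δ))).toReal / phiF (p i₀) θ x₀)) / δ)
        (𝓝[>] (0:ℝ)) (𝓝 0) := by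
      have hlim : Tendsto (fun δ : ℝ => Cc * (τ i₀ (Set.Ioc x (x+δ))).toReal)
          (𝓝[>] (0:ℝ)) (𝓝 0) := by
        simpa using hmeas0.const_mul Cc
      apply squeeze_zero_norm' ?_ hlim
      filter_upwards [Ioo_mem_nhdsGT_of_mem (by norm_num : (0:ℝ) ∈ Set.Ico 0 1),
        self_mem_nhdsWithin] with δ hδ1 hδpos
      have hδ0 : (0:ℝ) < δ := hδ1.1
      have hδle1 : δ ≤ 1 := hδ1.2.le
      have hptw : ∀ y ∈ Set.Ioc x (x+δ),
          Real.exp (-θ*(x+δ)) * hFF (p i₀) θ x₀ y - phiF (p i₀) θ (x+δ) / phiF (p i₀) θ x₀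
            = (Real.exp (-θ*(x+δ)) * Real.exp (θ*y) * phiF (p i₀) θ y
                - phiF (p i₀) θ (x+δ)) / phiF (p i₀) θ x₀ := by
        intro y hy
        have hyx₀ : x₀ ≤ y := le_trans hx (le_of_lt hy.1)
        unfold hFF
        rw [max_eq_right hyx₀, min_eq_left hyx₀]
        rw [show -θ*y = -(θ*y) by ring, Real.exp_neg]
        have h1 := Real.exp_ne_zero (θ*y)
        field_simp
      have hR1 : Real.exp (-θ*(x+δ)) * (∫ y in Set.Ioc x (x+δ), hFF (p i₀) θ x₀ y ∂(τ i₀))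
            - phiF (p i₀) θ (x+δ) * ((τ i₀ (Set.Ioc x (x+δ))).toReal / phiF (p i₀) θ x₀)
          = ∫ y in Set.Ioc x (x+δ),
              (Real.exp (-θ*(x+δ)) * hFF (p i₀) θ x₀ y
                - phiF (p i₀) θ (x+δ) / phiF (p i₀) θ x₀) ∂(τ i₀) := by
        rw [integral_sub ((hcont x (x+δ) hx0.le).const_mul _)
          (integrableOn_const (measure_ne_top _ _))]
        rw [integral_const_mul, setIntegral_const, smul_eq_mul, measureReal_def]
        ring
      have hnormR : ‖Real.exp (-θ*(x+δ)) * (∫ y in Set.Ioc x (x+δ), hFF (p i₀) θ x₀ y ∂(τ i₀))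
            - phiF (p i₀) θ (x+δ) * ((τ i₀ (Set.Ioc x (x+δ))).toReal / phiF (p i₀) θ x₀)‖
          ≤ (Cc*δ) * (τ i₀ (Set.Ioc x (x+δ))).toReal := by
        rw [hR1, ← measureReal_def]
        apply norm_setIntegral_le_of_norm_le_const (measure_lt_top _ _)
        intro y hy
        rw [Real.norm_eq_abs, hptw y hy, abs_div, abs_of_pos hφx₀]
        rw [show Cc * δ = (θ/(p i₀) * Real.exp (θ*(x+1)) * δ) / phiF (p i₀) θ x₀ from
          by rw [hCc]; ring]
        gcongr
        exact keybound hpi hθ0 hδ0 hδle1 hy.1 hy.2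
      rw [norm_div, Real.norm_of_nonneg hδ0.le, div_le_iff₀ hδ0]
      calc ‖Real.exp (-θ*(x+δ)) * (∫ y in Set.Ioc x (x+δ), hFF (p i₀) θ x₀ y ∂(τ i₀))
            - phiF (p i₀) θ (x+δ) * ((τ i₀ (Set.Ioc x (x+δ))).toReal / phiF (p i₀) θ x₀)‖
          ≤ (Cc*δ) * (τ i₀ (Set.Ioc x (x+δ))).toReal := hnormR
        _ = Cc * (τ i₀ (Set.Ioc x (x+δ))).toReal * δ := by ring
    have hgd : Tendsto (fun δ : ℝ =>
        ((Real.exp (-θ*(x+δ)) * A + phiF (p i₀) θ (x+δ) * B)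
          - (Real.exp (-θ*x) * A + phiF (p i₀) θ x * B)) / δ) (𝓝[>] (0:ℝ))
        (𝓝 ((-θ * Real.exp (-θ*x)) * A
          + ((1/(p i₀)) * (θ * Real.cosh (θ*x)) + (-θ * Real.exp (-θ*x))) * B)) := by
      have hd := hasDeriv_g (p i₀) θ A B x
      have hmap : Tendsto (fun δ : ℝ => x + δ) (𝓝[>] (0:ℝ)) (𝓝[≠] x) := by
        apply tendsto_nhdsWithin_of_tendsto_nhds_of_eventually_within
        · have hcont2 : Tendsto (fun δ : ℝ => x + δ) (𝓝 0) (𝓝 (x+0)) :=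
            (continuous_const.add continuous_id).tendsto 0
          rw [add_zero] at hcont2
          exact hcont2.mono_left nhdsWithin_le_nhds
        · filter_upwards [self_mem_nhdsWithin] with δ hδ
          simp only [Set.mem_compl_iff, Set.mem_singleton_iff]
          have hδ0 : (0:ℝ) < δ := hδ
          intro hcon
          linarith [hcon]
      have hcomp := (hasDerivAt_iff_tendsto_slope.mp hd).comp hmap
      refine hcomp.congr fun δ => ?_
      simp only [Function.comp_apply, slope_def_field]
      rw [add_sub_cancel_left]
    have hsum2 := hgd.add hRtend
    rw [add_zero] at hsum2
    refine hsum2.congr' ?_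
    filter_upwards [self_mem_nhdsWithin] with δ hδ
    have hδ0 : (0:ℝ) < δ := hδ
    rw [key (x+δ) (by linarith), hfxg]
    ring
  · -- the identity
    rw [hfxg, hB]
    unfold spiderPsiT phiF
    have hcs : Real.cosh (θ*x) + Real.sinh (θ*x) = Real.exp (θ*x) := Real.cosh_add_sinh _
    have hΦ0 : (1/p i₀) * Real.sinh (θ * x₀) + Real.exp (-θ * x₀) ≠ 0 := by
      have := hφx₀; unfold phiF at this; exact this.ne'
    rw [show -θ*x = -(θ*x) by ring, Real.exp_neg]
    have he := Real.exp_ne_zero (θ*x)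
    rw [show Real.cosh (θ*x) = Real.exp (θ*x) - Real.sinh (θ*x) by linarith]
    field_simp
    ring
end
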